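/- arXiv:1801.03347 — 2 statements merged into one kernel-verified Lean document; each statement's English description precedes it below -/
import Mathlib

section
/- Let G=(V,E,w) be a connected weighted graph with edge weights in the open interval (0,1). Define the quality of a cluster C ⊆ V (a nonempty subset inducing a connected subgraph) as Φ(C) = 0 if C = V, Φ(C) = max(Out(C)) if |C| = 1, and Φ(C) = max(Out(C))/min(MST(C)) otherwise, where Out(C) is the set of edges with exactly one endpoint in C, MST(C) is a maximum spanning tree of the subgraph induced by C, and max/min denote maximum/minimum edge weights. Then for any k ≥ 1, there exists a partition of V into k clusters C_1,...,C_k (each inducing a connected subgraph) such that max_i Φ(C_i) ≤ 1. In particular, any partition minimizing max_i Φ(C_i) over all k-partitions has value at most 1. -/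
open scoped Classical
noncomputable section

namespace Bal

variable {V : Type*}

/-- Total weight of the edges of a graph. -/
def totalWeight {α : Type*} [Fintype α] (H : SimpleGraph α) (w : Sym2 α → ℝ) : ℝ :=
  ∑ e : Sym2 α, if e ∈ H.edgeSet then w e else 0

/-- `T` is a maximum spanning tree of `G` w.r.t. the weight `w`. -/
def IsMaxSpanTree {α : Type*} [Fintype α] (G T : SimpleGraph α) (w : Sym2 α → ℝ) : Prop :=
  T ≤ G ∧ T.IsTree ∧
    ∀ T' : SimpleGraph α, T' ≤ G → T'.IsTree → totalWeight T' w ≤ totalWeight T w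

/-- Weight function on the induced subgraph on `C`. -/
def subWeight (w : Sym2 V → ℝ) (C : Set V) : Sym2 C → ℝ :=
  fun e => w (e.map Subtype.val)

/-- Edges of `G` with exactly one endpoint in `C`. -/
def outEdges (G : SimpleGraph V) (C : Set V) : Set (Sym2 V) :=
  {e | e ∈ G.edgeSet ∧ ∃ a b, e = s(a, b) ∧ a ∈ C ∧ b ∉ C}

/-- Edges of `G` with both endpoints in `C`. -/
def inEdges (G : SimpleGraph V) (C : Set V) : Set (Sym2 V) :=
  {e | e ∈ G.edgeSet ∧ ∀ x ∈ e, x ∈ C}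

/-- `max(Out(C))`, with the convention `sSup ∅ = 0`. -/
def maxOut (G : SimpleGraph V) (w : Sym2 V → ℝ) (C : Set V) : ℝ :=
  sSup (w '' outEdges G C)

/-- `min(E(C))`, with the convention that it is `1` for singletons. -/
def minIn (G : SimpleGraph V) (w : Sym2 V → ℝ) (C : Set V) : ℝ :=
  if C.Subsingleton then 1 else sInf (w '' inEdges G C)

/-- `min(MST(C))` : minimum weight of an edge of a maximum spanning tree of `G[C]`,
with the convention that it is `1` for singletons. -/
def minMST [Fintype V] (G : SimpleGraph V) (w : Sym2 V → ℝ) (C : Set V) : ℝ :=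
  if C.Subsingleton then 1
  else if h : ∃ T : SimpleGraph C, IsMaxSpanTree (G.induce C) T (subWeight w C) then
    sInf (subWeight w C '' h.choose.edgeSet)
  else 1

/-- Quality measure of a cluster in a graph: `max(Out(C)) / min(MST(C))`. -/
def phi [Fintype V] (G : SimpleGraph V) (w : Sym2 V → ℝ) (C : Set V) : ℝ :=
  maxOut G w C / minMST G w C

/-- Quality measure of a cluster in a tree: `max(Out(C)) / min(E(C))`. -/
def phiT (G : SimpleGraph V) (w : Sym2 V → ℝ) (C : Set V) : ℝ :=
  maxOut G w C / minIn G w C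

/-- `𝒞` is a partition of `U ⊆ V` into `G`-connected parts. -/
def IsPartitionOn (G : SimpleGraph V) (U : Set V) (𝒞 : Set (Set V)) : Prop :=
  (∀ C ∈ 𝒞, C.Nonempty ∧ C ⊆ U ∧ (G.induce C).Connected) ∧
  (∀ C ∈ 𝒞, ∀ C' ∈ 𝒞, C ≠ C' → Disjoint C C') ∧ ⋃₀ 𝒞 = U

/-- A `k`-clustering of a graph `G` on vertex set `V`. -/
def IsClustering (G : SimpleGraph V) (𝒞 : Set (Set V)) (k : ℕ) : Prop :=
  IsPartitionOn G Set.univ 𝒞 ∧ 𝒞.ncard = k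

/-- Evaluation of a clustering of a graph (min-max quality measure, MST-based). -/
def eval [Fintype V] (G : SimpleGraph V) (w : Sym2 V → ℝ) (𝒞 : Set (Set V)) : ℝ :=
  sSup (phi G w '' 𝒞)

/-- Evaluation of a clustering of a tree. -/
def evalT (G : SimpleGraph V) (w : Sym2 V → ℝ) (𝒞 : Set (Set V)) : ℝ :=
  sSup (phiT G w '' 𝒞)

/-- `𝒞` is an optimal `k`-clustering of `G`. -/
def IsOptimal [Fintype V] (G : SimpleGraph V) (w : Sym2 V → ℝ) (k : ℕ) (𝒞 : Set (Set V)) : Prop :=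
  IsClustering G 𝒞 k ∧ ∀ 𝒟, IsClustering G 𝒟 k → eval G w 𝒞 ≤ eval G w 𝒟

/-- All edge weights lie in the open interval `(0,1)`. -/
def weightsOK (G : SimpleGraph V) (w : Sym2 V → ℝ) : Prop :=
  ∀ e ∈ G.edgeSet, 0 < w e ∧ w e < 1

/-- The set of connected components (as vertex sets) of a graph. -/
def components (G : SimpleGraph V) : Set (Set V) :=
  {C | ∃ x : V, C = {y | G.Reachable x y}}

/-! ### Auxiliary graph-theoretic lemmas -/

section Aux

open SimpleGraph

variable {α : Type*}

lemma sym2_cases (e : Sym2 α) : ∃ a b, e = s(a, b) := by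
  induction e using Sym2.ind with
  | _ a b => exact ⟨a, b, rfl⟩

lemma reachable_exists_adj {K : SimpleGraph α} {x y : α} (h : K.Reachable x y) (hxy : x ≠ y) :
    ∃ z, K.Adj x z := by
  obtain ⟨p⟩ := h
  cases p with
  | nil => exact absurd rfl hxy
  | cons h _ => exact ⟨_, h⟩

/-- Case analysis for reachability after deleting one edge. -/
lemma reach_cases {G : SimpleGraph α} {a b : α} {x y : α} (p : G.Walk x y) :
    (G.deleteEdges {s(a,b)}).Reachable x y ∨
    ((G.deleteEdges {s(a,b)}).Reachable x a ∧ (G.deleteEdges {s(a,b)}).Reachable b y) ∨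
    ((G.deleteEdges {s(a,b)}).Reachable x b ∧ (G.deleteEdges {s(a,b)}).Reachable a y) := by
  set F := G.deleteEdges {s(a,b)} with hF
  induction p with
  | nil => exact Or.inl (Reachable.refl _)
  | @cons x z y h p ih =>
    by_cases he : s(x,z) = s(a,b)
    · rw [Sym2.eq_iff] at he
      rcases he with ⟨rfl, rfl⟩ | ⟨rfl, rfl⟩
      · rcases ih with h1 | ⟨h1, h2⟩ | ⟨h1, h2⟩
        · exact Or.inr (Or.inl ⟨Reachable.refl _, h1⟩)
        · exact Or.inl (h1.symm.trans h2)
        · exact Or.inl h2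
      · rcases ih with h1 | ⟨h1, h2⟩ | ⟨h1, h2⟩
        · exact Or.inr (Or.inr ⟨Reachable.refl _, h1⟩)
        · exact Or.inl h2
        · exact Or.inl (h1.symm.trans h2)
    · have hxz : F.Reachable x z := (deleteEdges_adj.2 ⟨h, by simpa using he⟩).reachable
      rcases ih with h1 | ⟨h1, h2⟩ | ⟨h1, h2⟩
      · exact Or.inl (hxz.trans h1)
      · exact Or.inr (Or.inl ⟨hxz.trans h1, h2⟩)
      · exact Or.inr (Or.inr ⟨hxz.trans h1, h2⟩)

lemma reach_or {G : SimpleGraph α} (hG : G.Preconnected) (a b x : α) :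
    (G.deleteEdges {s(a,b)}).Reachable x a ∨ (G.deleteEdges {s(a,b)}).Reachable x b := by
  obtain ⟨p⟩ := hG x a
  rcases reach_cases (a := a) (b := b) p with h1 | ⟨h1, h2⟩ | ⟨h1, h2⟩
  · exact Or.inl h1
  · exact Or.inl h1
  · exact Or.inr h1

lemma conn_delete_of_reach {G : SimpleGraph α} (hG : G.Connected) {a b : α}
    (hr : (G.deleteEdges {s(a,b)}).Reachable a b) : (G.deleteEdges {s(a,b)}).Connected := by
  have : Nonempty α := hG.nonempty
  refine ⟨fun x y => ?_⟩
  obtain ⟨p⟩ := hG.preconnected x y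
  rcases reach_cases (a := a) (b := b) p with h1 | ⟨h1, h2⟩ | ⟨h1, h2⟩
  · exact h1
  · exact (h1.trans hr).trans h2
  · exact (h1.trans hr.symm).trans h2

/-- Every edge of a tree is a bridge. -/
lemma tree_not_reach_delete {T : SimpleGraph α} (hT : T.IsTree) {a b : α} (hab : T.Adj a b) :
    ¬(T.deleteEdges {s(a,b)}).Reachable a b := by
  have := (isAcyclic_iff_forall_adj_isBridge.1 hT.IsAcyclic) hab
  rw [isBridge_iff] at this
  exact this

lemma exists_spanning_tree [Fintype α] {G : SimpleGraph α} (hG : G.Connected) :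
    ∃ T, T ≤ G ∧ T.IsTree := by
  classical
  obtain ⟨H, ⟨hHG, hHc⟩, hmin⟩ := Set.exists_min_image {H : SimpleGraph α | H ≤ G ∧ H.Connected}
    (fun H => H.edgeFinset.card) (Set.toFinite _) ⟨G, le_refl _, hG⟩
  refine ⟨H, hHG, hHc, ?_⟩
  rw [isAcyclic_iff_forall_edge_isBridge]
  intro e he
  induction e with
  | _ u v =>
    rw [isBridge_iff]
    rw [mem_edgeSet] at he
    refine fun hreach => ?_
    have hconn : (H.deleteEdges {s(u,v)}).Connected := conn_delete_of_reach hHc hreach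
    have hle := hmin (H.deleteEdges {s(u,v)}) ⟨(deleteEdges_le _).trans hHG, hconn⟩
    have hcard : (H.deleteEdges {s(u,v)}).edgeFinset.card < H.edgeFinset.card := by
      apply Finset.card_lt_card
      rw [Finset.ssubset_iff_of_subset]
      · exact ⟨s(u,v), by simp [mem_edgeFinset, he], by simp [edgeSet_deleteEdges]⟩
      · intro e h
        simp only [mem_edgeFinset, edgeSet_deleteEdges, Set.mem_diff] at h ⊢
        exact h.1
    exact absurd hcard (not_lt.2 (by convert hle))

lemma totalWeight_eq [Fintype α] (H : SimpleGraph α) (w : Sym2 α → ℝ) :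
    totalWeight H w = ∑ e ∈ H.edgeSet.toFinite.toFinset, w e := by
  classical
  rw [totalWeight, ← Finset.sum_filter]
  apply Finset.sum_congr _ (fun _ _ => rfl)
  ext e
  simp only [Finset.mem_filter, Finset.mem_univ, true_and, Set.Finite.mem_toFinset]

lemma ncard_edgeSet_of_tree [Fintype α] {T : SimpleGraph α} (hT : T.IsTree) :
    T.edgeSet.ncard + 1 = Fintype.card α := by
  classical
  have h1 := hT.card_edgeFinset
  rwa [edgeFinset, ← Set.ncard_eq_toFinset_card'] at h1

lemma istree_of_connected_card [Fintype α] {H : SimpleGraph α} (hc : H.Connected)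
    (hcard : H.edgeSet.ncard + 1 = Fintype.card α) : H.IsTree := by
  obtain ⟨T, hTH, hT⟩ := exists_spanning_tree hc
  have hsub : T.edgeSet ⊆ H.edgeSet := edgeSet_mono hTH
  have hT1 := ncard_edgeSet_of_tree hT
  have : H.edgeSet = T.edgeSet :=
    (Set.eq_of_subset_of_ncard_le hsub (by omega) (Set.toFinite _)).symm
  rwa [← edgeSet_inj.1 this.symm]

section Exchange
variable [Fintype α] {T : SimpleGraph α} {a b u v : α}

lemma exchange_facts (hT : T.IsTree) (hab : T.Adj a b)
    (huv : ¬(T.deleteEdges {s(a,b)}).Reachable u v) (hgf : s(u,v) ≠ s(a,b)) :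
    (fromEdgeSet (insert s(u,v) (T.edgeSet \ {s(a,b)}))).IsTree ∧
      s(u,v) ∉ T.edgeSet ∧ u ≠ v ∧
      (fromEdgeSet (insert s(u,v) (T.edgeSet \ {s(a,b)}))).edgeSet
        = insert s(u,v) (T.edgeSet \ {s(a,b)}) := by
  classical
  set F := T.deleteEdges {s(a,b)} with hFdef
  set H := fromEdgeSet (insert s(u,v) (T.edgeSet \ {s(a,b)})) with hHdef
  have hne : u ≠ v := by rintro rfl; exact huv (Reachable.refl _)
  have hFH : F ≤ H := by
    intro x y hxy
    rw [deleteEdges_adj] at hxy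
    exact (fromEdgeSet_adj _).2
      ⟨Set.mem_insert_of_mem _ ⟨(T.mem_edgeSet).2 hxy.1, by simpa using hxy.2⟩, hxy.1.ne⟩
  have hHuv : H.Adj u v := (fromEdgeSet_adj _).2 ⟨Set.mem_insert _ _, hne⟩
  have hg_notin : s(u,v) ∉ T.edgeSet := by
    intro hmem
    exact huv ((deleteEdges_adj.2 ⟨(T.mem_edgeSet).1 hmem, by simpa using hgf⟩).reachable)
  have hnab : ¬F.Reachable a b := tree_not_reach_delete hT hab
  have hor := reach_or (G := T) hT.isConnected.preconnected a b
  have hsides : (F.Reachable u a ∧ F.Reachable v b) ∨ (F.Reachable u b ∧ F.Reachable v a) := by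
    rcases hor u with hu | hu <;> rcases hor v with hv | hv
    · exact absurd (hu.trans hv.symm) huv
    · exact Or.inl ⟨hu, hv⟩
    · exact Or.inr ⟨hu, hv⟩
    · exact absurd (hu.trans hv.symm) huv
  have hHab : H.Reachable a b := by
    rcases hsides with ⟨h1, h2⟩ | ⟨h1, h2⟩
    · exact ((h1.symm.mono hFH).trans hHuv.reachable).trans (h2.mono hFH)
    · exact ((h2.symm.mono hFH).trans hHuv.reachable.symm).trans (h1.mono hFH)
  have : Nonempty α := hT.isConnected.nonempty
  have hHconn : H.Connected := by
    refine ⟨fun x y => ?_⟩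
    have hx := hor x
    have hy := hor y
    have hxa : H.Reachable x a := by
      rcases hx with h | h
      · exact h.mono hFH
      · exact (h.mono hFH).trans hHab.symm
    have hya : H.Reachable y a := by
      rcases hy with h | h
      · exact h.mono hFH
      · exact (h.mono hFH).trans hHab.symm
    exact hxa.trans hya.symm
  have hnodiag : ∀ e ∈ insert s(u,v) (T.edgeSet \ {s(a,b)}), ¬ e.IsDiag := by
    rintro e (rfl | ⟨he, -⟩)
    · simpa using hne
    · exact T.not_isDiag_of_mem_edgeSet he
  have hedge : H.edgeSet = insert s(u,v) (T.edgeSet \ {s(a,b)}) := by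
    rw [hHdef, edgeSet_fromEdgeSet]
    ext e
    simp only [Set.mem_diff, Set.mem_setOf_eq]
    exact ⟨fun h => h.1, fun h => ⟨h, hnodiag e h⟩⟩
  have hab_mem : s(a,b) ∈ T.edgeSet := (T.mem_edgeSet).2 hab
  have hnotmem : s(u,v) ∉ T.edgeSet \ {s(a,b)} := fun h => hg_notin h.1
  have hcards : H.edgeSet.ncard + 1 = Fintype.card α := by
    rw [hedge, Set.ncard_insert_of_notMem hnotmem,
      Set.ncard_diff_singleton_of_mem hab_mem]
    have h1 := ncard_edgeSet_of_tree hT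
    have hpos : 0 < T.edgeSet.ncard := by
      rw [Set.ncard_pos]
      exact ⟨_, hab_mem⟩
    omega
  exact ⟨istree_of_connected_card hHconn hcards, hg_notin, hne, hedge⟩

/-- Cut property of a maximum spanning tree. -/
lemma maxtree_cut {G : SimpleGraph α} {w : Sym2 α → ℝ} (hmax : IsMaxSpanTree G T w)
    {p q : α} (hab : T.Adj a b) (hpq : G.Adj p q)
    (hcut : ¬(T.deleteEdges {s(a,b)}).Reachable p q) : w s(p,q) ≤ w s(a,b) := by
  classical
  by_cases hgf : s(p,q) = s(a,b)
  · rw [hgf]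
  obtain ⟨hHtree, hg_notin, hne, hedge⟩ := exchange_facts hmax.2.1 hab hcut hgf
  set H := fromEdgeSet (insert s(p,q) (T.edgeSet \ {s(a,b)})) with hHdef
  have hHG : H ≤ G := by
    intro x y hxy
    rw [hHdef, fromEdgeSet_adj] at hxy
    rcases hxy.1 with h | h
    · rw [Sym2.eq_iff] at h
      rcases h with ⟨rfl, rfl⟩ | ⟨rfl, rfl⟩
      · exact hpq
      · exact hpq.symm
    · exact hmax.1 ((T.mem_edgeSet).1 h.1)
  have hle := hmax.2.2 H hHG hHtree
  have hwH : totalWeight H w + w s(a,b) = totalWeight T w + w s(p,q) := by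
    rw [totalWeight_eq, totalWeight_eq]
    have hab_mem : s(a,b) ∈ T.edgeSet.toFinite.toFinset := by
      rw [Set.Finite.mem_toFinset]; exact (T.mem_edgeSet).2 hab
    have hefin : H.edgeSet.toFinite.toFinset
        = insert s(p,q) ((T.edgeSet.toFinite.toFinset).erase s(a,b)) := by
      ext e
      simp only [Set.Finite.mem_toFinset, hedge, Set.mem_insert_iff, Finset.mem_insert,
        Finset.mem_erase, Set.mem_diff, Set.mem_singleton_iff]
      tauto
    have hnotmem : s(p,q) ∉ (T.edgeSet.toFinite.toFinset).erase s(a,b) := by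
      intro h
      exact hg_notin (Set.Finite.mem_toFinset _ |>.1 (Finset.mem_of_mem_erase h))
    rw [hefin, Finset.sum_insert hnotmem]
    have := Finset.sum_erase_add (T.edgeSet.toFinite.toFinset) w hab_mem
    linarith
  linarith

end Exchange

/-- Existence of a maximum spanning tree. -/
lemma exists_maxSpanTree [Fintype α] {G : SimpleGraph α} (hG : G.Connected) (w : Sym2 α → ℝ) :
    ∃ T, IsMaxSpanTree G T w := by
  have hfin : Finite (SimpleGraph α) := Finite.of_injective _ SimpleGraph.adj_injective
  obtain ⟨T0, hT0⟩ := exists_spanning_tree hG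
  obtain ⟨T, ⟨hTG, hTt⟩, hmax⟩ := Set.exists_max_image {H : SimpleGraph α | H ≤ G ∧ H.IsTree}
    (fun H => totalWeight H w) (Set.toFinite _) ⟨T0, hT0⟩
  exact ⟨T, hTG, hTt, fun T' h1 h2 => hmax T' ⟨h1, h2⟩⟩

end Aux

/-! ### Good clusters -/

section GoodClusters

open SimpleGraph

/-- Invariant for clusters during the splitting process: nonempty, connected through
tree edges inside the cluster, and every outgoing edge is lighter than every tree edge
inside the cluster. -/
def GoodAt (G T : SimpleGraph V) (w : Sym2 V → ℝ) (C : Set V) : Prop :=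
  C.Nonempty ∧ (∀ x ∈ C, ∀ y ∈ C, (SimpleGraph.fromEdgeSet (inEdges T C)).Reachable x y) ∧
    ∀ e ∈ outEdges G C, ∀ f ∈ inEdges T C, w e ≤ w f

variable {G T : SimpleGraph V} {w : Sym2 V → ℝ} {C : Set V} {a b : V}

lemma inEdges_adj {x y : V} (h : (SimpleGraph.fromEdgeSet (inEdges T C)).Adj x y) :
    T.Adj x y ∧ x ∈ C ∧ y ∈ C := by
  rw [fromEdgeSet_adj] at h
  exact ⟨(T.mem_edgeSet).1 h.1.1,
    h.1.2 x (Sym2.mem_mk_left x y), h.1.2 y (Sym2.mem_mk_right x y)⟩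

lemma mem_inEdges_of_adj {x y : V} (h : T.Adj x y) (hx : x ∈ C) (hy : y ∈ C) :
    s(x,y) ∈ inEdges T C := by
  refine ⟨(T.mem_edgeSet).2 h, ?_⟩
  intro z hz
  rw [Sym2.mem_iff] at hz
  rcases hz with rfl | rfl <;> assumption

lemma walk_reach_induce {K : SimpleGraph V}
    (h : ∀ x y, K.Adj x y → G.Adj x y ∧ x ∈ C ∧ y ∈ C) {x y : V} (p : K.Walk x y) :
    ∀ (hx : x ∈ C) (hy : y ∈ C), (G.induce C).Reachable ⟨x, hx⟩ ⟨y, hy⟩ := by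
  induction p with
  | nil => intro hx hy; exact Reachable.refl _
  | @cons x z y hadj p ih =>
    intro hx hy
    obtain ⟨hG, -, hz⟩ := h _ _ hadj
    have hA : (G.induce C).Adj ⟨x, hx⟩ ⟨z, hz⟩ := hG
    exact hA.reachable.trans (ih hz hy)

lemma GoodAt.induce_connected (hTG : T ≤ G) (hC : GoodAt G T w C) :
    (G.induce C).Connected := by
  obtain ⟨⟨c, hc⟩, hreach, -⟩ := hC
  have : Nonempty C := ⟨⟨c, hc⟩⟩
  refine ⟨fun x y => ?_⟩
  obtain ⟨p⟩ := hreach x x.2 y y.2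
  have := walk_reach_induce (G := G) (C := C)
    (fun u v huv => by
      obtain ⟨h1, h2, h3⟩ := inEdges_adj huv
      exact ⟨hTG h1, h2, h3⟩) p x.2 y.2
  exact this

lemma fc_le_delete : SimpleGraph.fromEdgeSet (inEdges T C \ {s(a,b)}) ≤ T.deleteEdges {s(a,b)} := by
  intro x y h
  rw [fromEdgeSet_adj] at h
  exact deleteEdges_adj.2 ⟨(T.mem_edgeSet).1 h.1.1.1, h.1.2⟩

lemma split_cover
    (hC2 : ∀ x ∈ C, ∀ y ∈ C, (SimpleGraph.fromEdgeSet (inEdges T C)).Reachable x y)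
    (haC : a ∈ C) {v : V} (hv : v ∈ C) :
    (SimpleGraph.fromEdgeSet (inEdges T C \ {s(a,b)})).Reachable a v ∨
      (SimpleGraph.fromEdgeSet (inEdges T C \ {s(a,b)})).Reachable b v := by
  set FC := SimpleGraph.fromEdgeSet (inEdges T C \ {s(a,b)}) with hFC
  obtain ⟨p⟩ := hC2 a haC v hv
  have key : ∀ x y (p : (SimpleGraph.fromEdgeSet (inEdges T C)).Walk x y),
      (FC.Reachable a x ∨ FC.Reachable b x) → (FC.Reachable a y ∨ FC.Reachable b y) := by
    intro x y p
    induction p with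
    | nil => exact id
    | @cons x z y hadj p ih =>
      intro hx
      apply ih
      by_cases he : s(x,z) = s(a,b)
      · rw [Sym2.eq_iff] at he
        rcases he with ⟨rfl, rfl⟩ | ⟨rfl, rfl⟩
        · exact Or.inr (Reachable.refl _)
        · exact Or.inl (Reachable.refl _)
      · have hadj2 : FC.Adj x z :=
          (fromEdgeSet_adj _).2 ⟨⟨((fromEdgeSet_adj _).1 hadj).1, he⟩, hadj.ne⟩
        rcases hx with h | h
        · exact Or.inl (h.trans hadj2.reachable)
        · exact Or.inr (h.trans hadj2.reachable)
  exact key a v p (Or.inl (Reachable.refl _))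

lemma split_good [Fintype V] (hmax : IsMaxSpanTree G T w) (hC : GoodAt G T w C)
    (hab : T.Adj a b) (haC : a ∈ C) (hbC : b ∈ C)
    (hmin : ∀ f ∈ inEdges T C, w s(a,b) ≤ w f) :
    GoodAt G T w {v ∈ C | (SimpleGraph.fromEdgeSet (inEdges T C \ {s(a,b)})).Reachable a v} := by
  set FC := SimpleGraph.fromEdgeSet (inEdges T C \ {s(a,b)}) with hFC
  set A := {v ∈ C | FC.Reachable a v} with hA
  have hAsub : A ⊆ C := fun v hv => hv.1
  have haA : a ∈ A := ⟨haC, Reachable.refl _⟩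
  have hclose : ∀ x z, x ∈ A → FC.Adj x z → z ∈ A := by
    intro x z hx hadj
    have h1 : s(x,z) ∈ inEdges T C \ {s(a,b)} := ((fromEdgeSet_adj _).1 hadj).1
    exact ⟨h1.1.2 z (Sym2.mem_mk_right x z), hx.2.trans hadj.reachable⟩
  refine ⟨⟨a, haA⟩, ?_, ?_⟩
  · -- connectivity through tree edges inside `A`
    have key : ∀ x y (p : FC.Walk x y), x ∈ A →
        (SimpleGraph.fromEdgeSet (inEdges T A)).Reachable x y ∧ y ∈ A := by
      intro x y p
      induction p with
      | nil => exact fun hx => ⟨Reachable.refl _, hx⟩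
      | @cons x z y hadj p ih =>
        intro hx
        have hz : z ∈ A := hclose x z hx hadj
        obtain ⟨hr, hy⟩ := ih hz
        have hTadj : T.Adj x z := (T.mem_edgeSet).1 ((fromEdgeSet_adj _).1 hadj).1.1.1
        have : (SimpleGraph.fromEdgeSet (inEdges T A)).Adj x z :=
          (fromEdgeSet_adj _).2 ⟨mem_inEdges_of_adj hTadj hx hz, hadj.ne⟩
        exact ⟨this.reachable.trans hr, hy⟩
    intro x hx y hy
    obtain ⟨p⟩ := hx.2
    obtain ⟨q⟩ := hy.2
    exact ((key a x p haA).1.symm).trans (key a y q haA).1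
  · -- weight bound
    rintro e ⟨heG, p, q, rfl, hpA, hqA⟩ f hf
    have hfC : f ∈ inEdges T C := ⟨hf.1, fun z hz => hAsub (hf.2 z hz)⟩
    have hwf : w s(a,b) ≤ w f := hmin f hfC
    by_cases hqC : q ∈ C
    · -- crossing edge: use the cut property of the maximum spanning tree
      have hqB : FC.Reachable b q := by
        rcases split_cover (b := b) hC.2.1 haC hqC with h | h
        · exact absurd ⟨hqC, h⟩ hqA
        · exact h
      have hnab : ¬(T.deleteEdges {s(a,b)}).Reachable a b :=
        tree_not_reach_delete hmax.2.1 hab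
      have hcut : ¬(T.deleteEdges {s(a,b)}).Reachable p q := by
        intro h
        exact hnab (((hpA.2.mono fc_le_delete).trans h).trans (hqB.mono fc_le_delete).symm)
      have hGpq : G.Adj p q := (G.mem_edgeSet).1 heG
      exact (maxtree_cut hmax hab hGpq hcut).trans hwf
    · -- outgoing edge of `C`
      exact hC.2.2 s(p,q) ⟨heG, p, q, rfl, hpA.1, hqC⟩ f hfC

end GoodClusters

section MainConstruction

open SimpleGraph

lemma exists_crossing {β : Type*} {K F : SimpleGraph β} {u v : β} (p : K.Walk u v)
    (h : ¬F.Reachable u v) : ∃ x y, K.Adj x y ∧ F.Reachable u x ∧ ¬F.Reachable u y := by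
  induction p with
  | nil => exact absurd (Reachable.refl _) h
  | @cons x z y hadj p ih =>
    by_cases hz : F.Reachable x z
    · have h2 : ¬F.Reachable z y := fun hr => h (hz.trans hr)
      obtain ⟨x', y', ha, h1, hn⟩ := ih h2
      exact ⟨x', y', ha, hz.trans h1, fun hr => hn (hz.symm.trans hr)⟩
    · exact ⟨x, z, hadj, Reachable.refl _, hz⟩

variable [Fintype V] {G T : SimpleGraph V} {w : Sym2 V → ℝ}

lemma good_phi_le_one (hw : weightsOK G w) (hmax : IsMaxSpanTree G T w)
    {C : Set V} (hC : GoodAt G T w C) : phi G w C ≤ 1 := by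
  by_cases hsub : C.Subsingleton
  · simp only [phi, minMST, maxOut, if_pos hsub, div_one]
    apply Real.sSup_le _ zero_le_one
    rintro r ⟨e, he, rfl⟩
    exact (hw e he.1).2.le
  · have hconnC : (G.induce C).Connected := hC.induce_connected hmax.1
    have hex : ∃ T' : SimpleGraph C, IsMaxSpanTree (G.induce C) T' (subWeight w C) :=
      exists_maxSpanTree hconnC (subWeight w C)
    simp only [phi, minMST, maxOut, if_neg hsub]
    rw [dif_pos hex]
    set T' := hex.choose with hT'def
    have hT' := hex.choose_spec
    obtain ⟨x, hx, y, hy, hxy⟩ := Set.not_subsingleton_iff.1 hsub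
    have hne2 : (⟨x, hx⟩ : C) ≠ ⟨y, hy⟩ := fun h => hxy (congrArg Subtype.val h)
    obtain ⟨z, hz⟩ := reachable_exists_adj (hT'.2.1.isConnected.preconnected _ _) hne2
    have hedges : (subWeight w C '' T'.edgeSet).Nonempty :=
      ⟨_, Set.mem_image_of_mem _ ((T'.mem_edgeSet).2 hz)⟩
    have hkey : ∀ r ∈ subWeight w C '' T'.edgeSet, 0 < r ∧ ∀ e ∈ outEdges G C, w e ≤ r := by
      rintro r ⟨f', hf', rfl⟩
      obtain ⟨u, v, rfl⟩ := sym2_cases f'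
      have hadj' : T'.Adj u v := (T'.mem_edgeSet).1 hf'
      have hGadj : G.Adj ↑u ↑v := hT'.1 hadj'
      have hsw : subWeight w C s(u,v) = w s((u : V), (v : V)) := by
        simp [subWeight]
      constructor
      · rw [hsw]; exact (hw _ ((G.mem_edgeSet).2 hGadj)).1
      · intro e he
        have hcut : ¬(T'.deleteEdges {s(u,v)}).Reachable u v :=
          tree_not_reach_delete hT'.2.1 hadj'
        obtain ⟨p⟩ := hC.2.1 (u : V) u.2 (v : V) v.2
        have hreach := walk_reach_induce
          (G := SimpleGraph.fromEdgeSet (inEdges T C)) (C := C)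
          (fun s t hst => ⟨hst, (inEdges_adj hst).2.1, (inEdges_adj hst).2.2⟩) p u.2 v.2
        obtain ⟨q⟩ := hreach
        obtain ⟨x', y', hadj2, h1, h2⟩ := exists_crossing q hcut
        have hTCadj : (SimpleGraph.fromEdgeSet (inEdges T C)).Adj ↑x' ↑y' := hadj2
        have hin : s((x' : V), (y' : V)) ∈ inEdges T C := ((fromEdgeSet_adj _).1 hTCadj).1
        have hb1 : w e ≤ w s((x' : V), (y' : V)) := hC.2.2 e he _ hin
        have hcut2 : ¬(T'.deleteEdges {s(u,v)}).Reachable x' y' := fun h => h2 (h1.trans h)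
        have hGadj2 : (G.induce C).Adj x' y' := hmax.1 ((inEdges_adj hTCadj).1)
        have hb2 := maxtree_cut hT' hadj' hGadj2 hcut2
        have hsw2 : subWeight w C s(x', y') = w s((x' : V), (y' : V)) := by
          simp [subWeight]
        rw [hsw]
        rw [hsw, hsw2] at hb2
        exact hb1.trans hb2
    have hmem := hedges.csInf_mem (Set.toFinite _)
    obtain ⟨hpos, hb⟩ := hkey _ hmem
    rw [div_le_one hpos]
    apply Real.sSup_le _ hpos.le
    rintro r ⟨e, he, rfl⟩
    exact hb e he

lemma exists_good_partition (hconn : G.Connected) (hmax : IsMaxSpanTree G T w)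
    (j : ℕ) (hj1 : 1 ≤ j) (hjn : j ≤ Fintype.card V) :
    ∃ 𝒞 : Set (Set V), IsPartitionOn G Set.univ 𝒞 ∧ 𝒞.ncard = j ∧ ∀ C ∈ 𝒞, GoodAt G T w C := by
  induction j, hj1 using Nat.le_induction with
  | base =>
    have hNE : Nonempty V := hconn.nonempty
    have hgood : GoodAt G T w Set.univ := by
      refine ⟨Set.univ_nonempty, ?_, ?_⟩
      · intro x _ y _
        have hle : T ≤ SimpleGraph.fromEdgeSet (inEdges T Set.univ) := by
          intro u v' huv
          exact (fromEdgeSet_adj _).2 ⟨⟨(T.mem_edgeSet).2 huv, fun z _ => trivial⟩, huv.ne⟩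
        exact (hmax.2.1.isConnected.preconnected x y).mono hle
      · rintro e ⟨-, p, q, -, -, hq⟩
        exact absurd trivial hq
    refine ⟨{Set.univ}, ⟨?_, ?_, ?_⟩, Set.ncard_singleton _, ?_⟩
    · intro C hC; rw [Set.mem_singleton_iff] at hC; subst hC
      exact ⟨Set.univ_nonempty, subset_rfl, hgood.induce_connected hmax.1⟩
    · intro C hC C' hC' hne
      rw [Set.mem_singleton_iff] at hC hC'
      subst hC; subst hC'
      exact absurd rfl hne
    · simp
    · intro C hC; rw [Set.mem_singleton_iff] at hC; subst hC; exact hgood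
  | succ j hj1 ih =>
    obtain ⟨𝒞, hpart, hcard, hgood⟩ := ih (by omega)
    have hex2 : ∃ C ∈ 𝒞, ∃ x ∈ C, ∃ y ∈ C, x ≠ y := by
      by_contra hcon
      push_neg at hcon
      have hchoice : ∀ v : V, ∃ C, C ∈ 𝒞 ∧ v ∈ C := by
        intro v
        have hv : v ∈ ⋃₀ 𝒞 := by rw [hpart.2.2]; trivial
        obtain ⟨C, hC, hvC⟩ := hv
        exact ⟨C, hC, hvC⟩
      choose f hf1 hf2 using hchoice
      have hinj : Function.Injective f := by
        intro u v' huv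
        exact hcon (f u) (hf1 u) u (hf2 u) v' (by rw [huv]; exact hf2 v')
      have h2 : Nat.card V = (Set.range f).ncard := by
        rw [← Nat.card_coe_set_eq, Nat.card_range_of_injective hinj]
      have h3 : (Set.range f).ncard ≤ 𝒞.ncard :=
        Set.ncard_le_ncard (Set.range_subset_iff.2 hf1) (Set.toFinite _)
      have h4 : Nat.card V = Fintype.card V := Nat.card_eq_fintype_card
      omega
    obtain ⟨C, hC𝒞, x, hx, y, hy, hxy⟩ := hex2
    have hCgood := hgood C hC𝒞
    have hne : (inEdges T C).Nonempty := by
      obtain ⟨p⟩ := hCgood.2.1 x hx y hy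
      cases p with
      | nil => exact absurd rfl hxy
      | cons h _ => exact ⟨_, ((fromEdgeSet_adj _).1 h).1⟩
    obtain ⟨f₀, hf₀, hminf⟩ := Set.exists_min_image (inEdges T C) w (Set.toFinite _) hne
    obtain ⟨a, b, rfl⟩ := sym2_cases f₀
    have hTab : T.Adj a b := (T.mem_edgeSet).1 hf₀.1
    have haC : a ∈ C := hf₀.2 a (Sym2.mem_mk_left a b)
    have hbC : b ∈ C := hf₀.2 b (Sym2.mem_mk_right a b)
    set FC := SimpleGraph.fromEdgeSet (inEdges T C \ {s(a,b)}) with hFCdef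
    set A := {v ∈ C | FC.Reachable a v} with hAdef
    set B := {v ∈ C | FC.Reachable b v} with hBdef
    have hAgood : GoodAt G T w A := split_good hmax hCgood hTab haC hbC hminf
    have hBgood : GoodAt G T w B := by
      have hswap : s(b,a) = s(a,b) := Sym2.eq_swap
      have := split_good hmax hCgood hTab.symm hbC haC
        (by rw [hswap]; exact hminf)
      rw [hswap] at this
      exact this
    have hAsub : A ⊆ C := fun v hv => hv.1
    have hBsub : B ⊆ C := fun v hv => hv.1
    have hnab : ¬(T.deleteEdges {s(a,b)}).Reachable a b := tree_not_reach_delete hmax.2.1 hTab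
    have hdisjAB : Disjoint A B := by
      rw [Set.disjoint_left]
      rintro v ⟨hvC, hva⟩ ⟨-, hvb⟩
      exact hnab ((hva.mono fc_le_delete).trans (hvb.mono fc_le_delete).symm)
    have haA : a ∈ A := ⟨haC, Reachable.refl _⟩
    have hbB : b ∈ B := ⟨hbC, Reachable.refl _⟩
    have hABC : A ∪ B = C := by
      apply Set.Subset.antisymm (Set.union_subset hAsub hBsub)
      intro v hv
      rcases split_cover (b := b) hCgood.2.1 haC hv with h | h
      · exact Or.inl ⟨hv, h⟩
      · exact Or.inr ⟨hv, h⟩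
    have hAneB : A ≠ B := by
      intro h
      exact Set.disjoint_left.1 hdisjAB (h ▸ hbB) hbB
    have hAnot : A ∉ 𝒞 \ {C} := by
      rintro ⟨hA𝒞, hAC⟩
      have hACne : A ≠ C := by simpa using hAC
      exact Set.disjoint_left.1 (hpart.2.1 A hA𝒞 C hC𝒞 hACne) haA haC
    have hBnot : B ∉ 𝒞 \ {C} := by
      rintro ⟨hB𝒞, hBC⟩
      have hBCne : B ≠ C := by simpa using hBC
      exact Set.disjoint_left.1 (hpart.2.1 B hB𝒞 C hC𝒞 hBCne) hbB hbC
    have hgood' : ∀ D ∈ insert A (insert B (𝒞 \ {C})), GoodAt G T w D := by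
      intro D hD
      rw [Set.mem_insert_iff, Set.mem_insert_iff] at hD
      rcases hD with h | h | h
      · rw [h]; exact hAgood
      · rw [h]; exact hBgood
      · exact hgood D h.1
    have hAdisj_old : ∀ E ∈ 𝒞 \ {C}, Disjoint A E := by
      intro E hE
      have hECne : C ≠ E := fun h => hE.2 (by rw [← h]; rfl)
      exact (hpart.2.1 C hC𝒞 E hE.1 hECne).mono_left hAsub
    have hBdisj_old : ∀ E ∈ 𝒞 \ {C}, Disjoint B E := by
      intro E hE
      have hECne : C ≠ E := fun h => hE.2 (by rw [← h]; rfl)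
      exact (hpart.2.1 C hC𝒞 E hE.1 hECne).mono_left hBsub
    refine ⟨insert A (insert B (𝒞 \ {C})), ⟨?_, ?_, ?_⟩, ?_, hgood'⟩
    · intro D hD
      have hDgood := hgood' D hD
      exact ⟨hDgood.1, Set.subset_univ _, hDgood.induce_connected hmax.1⟩
    · intro D hD D' hD' hne'
      rw [Set.mem_insert_iff, Set.mem_insert_iff] at hD hD'
      rcases hD with h1 | h1 | h1 <;> rcases hD' with h2 | h2 | h2
      · exact absurd (h1.trans h2.symm) hne'
      · rw [h1, h2]; exact hdisjAB
      · rw [h1]; exact hAdisj_old _ h2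
      · rw [h1, h2]; exact hdisjAB.symm
      · exact absurd (h1.trans h2.symm) hne'
      · rw [h1]; exact hBdisj_old _ h2
      · rw [h2]; exact (hAdisj_old _ h1).symm
      · rw [h2]; exact (hBdisj_old _ h1).symm
      · exact hpart.2.1 D h1.1 D' h2.1 hne'
    · ext v
      simp only [Set.mem_sUnion, Set.mem_univ, iff_true]
      have hv : v ∈ ⋃₀ 𝒞 := by rw [hpart.2.2]; trivial
      obtain ⟨D, hD, hvD⟩ := hv
      by_cases hDC : D = C
      · subst hDC
        rw [← hABC] at hvD
        rcases hvD with h | h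
        · exact ⟨A, Set.mem_insert _ _, h⟩
        · exact ⟨B, Set.mem_insert_of_mem _ (Set.mem_insert _ _), h⟩
      · exact ⟨D, Set.mem_insert_of_mem _ (Set.mem_insert_of_mem _ ⟨hD, hDC⟩), hvD⟩
    · have hAnotmem : A ∉ insert B (𝒞 \ {C}) := by
        rw [Set.mem_insert_iff]
        rintro (h | h)
        · exact hAneB h
        · exact hAnot h
      rw [Set.ncard_insert_of_notMem hAnotmem, Set.ncard_insert_of_notMem hBnot,
        Set.ncard_diff_singleton_of_mem hC𝒞, hcard]
      omega

end MainConstruction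

/-- there is a k-clustering with value ≤ 1; hence any optimal one has value ≤ 1. -/
theorem statement0 {V : Type*} [Fintype V] (G : SimpleGraph V) (w : Sym2 V → ℝ)
    (hconn : G.Connected) (hw : weightsOK G w) (k : ℕ) (hk1 : 1 ≤ k)
    (hkn : k ≤ Fintype.card V) :
    (∃ 𝒞 : Set (Set V), IsClustering G 𝒞 k ∧ ∀ C ∈ 𝒞, phi G w C ≤ 1) ∧
    ∀ 𝒞 : Set (Set V), IsOptimal G w k 𝒞 → eval G w 𝒞 ≤ 1 := by
  classical
  obtain ⟨T, hmax⟩ := exists_maxSpanTree hconn w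
  obtain ⟨𝒞₀, hpart, hcard, hgood⟩ := exists_good_partition hconn hmax k hk1 hkn
  have hphi : ∀ C ∈ 𝒞₀, phi G w C ≤ 1 := fun C hC => good_phi_le_one hw hmax (hgood C hC)
  have hclust : IsClustering G 𝒞₀ k := ⟨hpart, hcard⟩
  refine ⟨⟨𝒞₀, hclust, hphi⟩, ?_⟩
  intro 𝒞 hopt
  refine (hopt.2 𝒞₀ hclust).trans ?_
  show sSup (phi G w '' 𝒞₀) ≤ 1
  apply Real.sSup_le _ zero_le_one
  rintro r ⟨C, hC, rfl⟩
  exact hphi C hC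

end Bal
end
end

section
/- Let G be a connected weighted graph with weights in (0,1) and let C* be an optimal k-clustering of G under the min-max quality measure Φ. Then for every cluster C ∈ C*, the maximum spanning tree of the subgraph induced by C is a subtree of some maximum spanning tree of G. -/
open scoped Classical
noncomputable section

namespace Bal

variable {V : Type*}

section Aux
open SimpleGraph
set_option linter.unusedSectionVars false
set_option maxHeartbeats 1600000
variable {α : Type*} [Fintype α]


lemma reachable_transfer {H H' : SimpleGraph α}
    (h : ∀ x y, H.Adj x y → H'.Reachable x y) {x y : α} (hr : H.Reachable x y) :
    H'.Reachable x y := by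
  obtain ⟨p⟩ := hr
  induction p with
  | nil => exact Reachable.refl _
  | cons ha _ ih => exact (h _ _ ha).trans ih

private lemma reach_split_walk {H : SimpleGraph α} {e : Sym2 α} {a b : α} (hab : e = s(a,b)) :
    ∀ {x y : α}, H.Walk x y →
      ((H.deleteEdges {e}).Reachable x y ∨
       ((H.deleteEdges {e}).Reachable x a ∧ (H.deleteEdges {e}).Reachable b y) ∨
       ((H.deleteEdges {e}).Reachable x b ∧ (H.deleteEdges {e}).Reachable a y)) := by
  intro x y p
  induction p with
  | nil => exact Or.inl (Reachable.refl _)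
  | @cons u v yy hadj q ih =>
    by_cases he : s(u, v) = e
    · rw [hab, Sym2.eq_iff] at he
      rcases he with ⟨hu, hv⟩ | ⟨hu, hv⟩
      · subst hu; subst hv
        rcases ih with h1 | ⟨h2, h3⟩ | ⟨h2, h3⟩
        · exact Or.inr (Or.inl ⟨Reachable.refl _, h1⟩)
        · exact Or.inr (Or.inl ⟨Reachable.refl _, h3⟩)
        · exact Or.inl h3
      · subst hu; subst hv
        rcases ih with h1 | ⟨h2, h3⟩ | ⟨h2, h3⟩
        · exact Or.inr (Or.inr ⟨Reachable.refl _, h1⟩)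
        · exact Or.inl h3
        · exact Or.inr (Or.inr ⟨Reachable.refl _, h3⟩)
    · have hadj' : (H.deleteEdges {e}).Adj u v := by
        rw [SimpleGraph.deleteEdges_adj]
        exact ⟨hadj, by simpa using he⟩
      rcases ih with h1 | ⟨h2, h3⟩ | ⟨h2, h3⟩
      · exact Or.inl (hadj'.reachable.trans h1)
      · exact Or.inr (Or.inl ⟨hadj'.reachable.trans h2, h3⟩)
      · exact Or.inr (Or.inr ⟨hadj'.reachable.trans h2, h3⟩)

/-- B2 -/
lemma reach_split {H : SimpleGraph α} {a b x : α} (hr : H.Reachable a x) :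
    (H.deleteEdges {s(a,b)}).Reachable a x ∨ (H.deleteEdges {s(a,b)}).Reachable b x := by
  obtain ⟨p⟩ := hr
  rcases reach_split_walk rfl p with h1 | ⟨h2, h3⟩ | ⟨h2, h3⟩
  · exact Or.inl h1
  · exact Or.inr h3
  · exact Or.inl h3

lemma reachable_delete_of_not_reachable {H : SimpleGraph α} {a b x y : α}
    (hx : ¬ H.Reachable x a) (hxy : H.Reachable x y) :
    (H.deleteEdges {s(a,b)}).Reachable x y := by
  obtain ⟨p⟩ := hxy
  refine ⟨p.toDeleteEdges _ ?_⟩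
  intro e he
  simp only [Set.mem_singleton_iff]
  rintro rfl
  exact hx ⟨p.takeUntil a (p.fst_mem_support_of_mem_edges he)⟩

lemma totalWeight_eq_sum (H : SimpleGraph α) (w : Sym2 α → ℝ) :
    totalWeight H w = ∑ e ∈ H.edgeSet.toFinite.toFinset, w e := by
  rw [totalWeight, ← Finset.sum_filter]
  congr 1
  ext e
  simp only [Finset.mem_filter, Finset.mem_univ, true_and, Set.Finite.mem_toFinset]

lemma edgeSet_fromEdgeSet_of_nodiag {s : Set (Sym2 α)} (h : ∀ e ∈ s, ¬ e.IsDiag) :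
    (SimpleGraph.fromEdgeSet s).edgeSet = s := by
  rw [edgeSet_fromEdgeSet]
  ext e
  simp only [Set.mem_diff, Set.mem_setOf_eq, and_iff_left_iff_imp]
  exact h e

lemma ncard_edgeSet_of_isTree {t : SimpleGraph α} (ht : t.IsTree) :
    t.edgeSet.ncard + 1 = Fintype.card α := by
  classical
  have h := ht.card_edgeFinset
  rwa [← Set.ncard_coe_finset, coe_edgeFinset] at h

/-- existence of spanning trees -/
lemma exists_spanning_tree_aux :
    ∀ (n : ℕ) (H : SimpleGraph α), H.edgeSet.ncard ≤ n → H.Connected →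
      ∃ t, t ≤ H ∧ t.IsTree := by
  intro n
  induction n with
  | zero =>
    intro H hcard hconn
    by_cases hac : H.IsAcyclic
    · exact ⟨H, le_refl _, ⟨hconn, hac⟩⟩
    · exfalso
      rw [isAcyclic_iff_forall_adj_isBridge] at hac
      push_neg at hac
      obtain ⟨v, w, hvw, -⟩ := hac
      have hmem : s(v, w) ∈ H.edgeSet := hvw
      have := (Set.ncard_pos (H.edgeSet.toFinite)).mpr ⟨_, hmem⟩
      omega
  | succ n ih =>
    intro H hcard hconn
    by_cases hac : H.IsAcyclic
    · exact ⟨H, le_refl _, ⟨hconn, hac⟩⟩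
    · rw [isAcyclic_iff_forall_adj_isBridge] at hac
      push_neg at hac
      obtain ⟨v, u, hvw, hnb⟩ := hac
      rw [isBridge_iff] at hnb
      push_neg at hnb
      have hreach : (H.deleteEdges {s(v,u)}).Reachable v u := hnb
      have hconn' : (H.deleteEdges {s(v,u)}).Connected := by
        rw [connected_iff]
        refine ⟨fun x y => ?_, hconn.nonempty⟩
        refine reachable_transfer (fun a b hab => ?_) (hconn.preconnected x y)
        by_cases he : s(a,b) = s(v,u)
        · rw [Sym2.eq_iff] at he
          rcases he with ⟨rfl, rfl⟩ | ⟨rfl, rfl⟩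
          · exact hreach
          · exact hreach.symm
        · exact (SimpleGraph.Adj.reachable
            (by rw [SimpleGraph.deleteEdges_adj]; exact ⟨hab, by simpa using he⟩))
      have hcard' : (H.deleteEdges {s(v,u)}).edgeSet.ncard ≤ n := by
        rw [edgeSet_deleteEdges]
        have hmem : s(v, u) ∈ H.edgeSet := hvw
        have := Set.ncard_diff_singleton_of_mem hmem
        have hpos := (Set.ncard_pos (H.edgeSet.toFinite)).mpr ⟨_, hmem⟩
        omega
      obtain ⟨t, ht1, ht2⟩ := ih _ hcard' hconn'
      exact ⟨t, ht1.trans (SimpleGraph.deleteEdges_le _), ht2⟩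

lemma exists_spanning_tree_s2 {H : SimpleGraph α} (hconn : H.Connected) :
    ∃ t, t ≤ H ∧ t.IsTree :=
  exists_spanning_tree_aux H.edgeSet.ncard H le_rfl hconn

/-- L1': a connected graph with `|V| - 1` edges is a tree. -/
lemma isTree_of_connected_of_ncard {t : SimpleGraph α} (hconn : t.Connected)
    (hcard : t.edgeSet.ncard + 1 = Fintype.card α) : t.IsTree := by
  obtain ⟨s, hs1, hs2⟩ := exists_spanning_tree_s2 hconn
  have hcs : s.edgeSet.ncard + 1 = Fintype.card α := ncard_edgeSet_of_isTree hs2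
  have hsub : s.edgeSet ⊆ t.edgeSet := edgeSet_subset_edgeSet.mpr hs1
  have : s.edgeSet = t.edgeSet :=
    Set.eq_of_subset_of_ncard_le hsub (by omega) (t.edgeSet.toFinite)
  rw [← edgeSet_inj.mp this]
  exact hs2

/-- transfer preserves paths -/
lemma isPath_transfer {H H' : SimpleGraph α} {a b : α} {p : H.Walk a b} (hp : p.IsPath)
    (h : ∀ e ∈ p.edges, e ∈ H'.edgeSet) : (p.transfer H' h).IsPath := by
  rw [Walk.isPath_def, Walk.support_transfer]
  exact hp.support_nodup

/-- B11 -/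
lemma not_reachable_delete_of_mem_path {t : SimpleGraph α} (hac : t.IsAcyclic)
    {a b : α} {p : t.Walk a b} (hp : p.IsPath) {g : Sym2 α} (hg : g ∈ p.edges) :
    ¬ (t.deleteEdges {g}).Reachable a b := by
  rintro ⟨q⟩
  set r : (t.deleteEdges {g}).Walk a b := q.toPath.val with hr
  have hrp : r.IsPath := q.toPath.2
  have hredge : ∀ e ∈ r.edges, e ∈ t.edgeSet := fun e he => by
    have := r.edges_subset_edgeSet he
    rw [edgeSet_deleteEdges] at this
    exact this.1
  have hr'p : (r.transfer t hredge).IsPath := isPath_transfer hrp hredge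
  have huniq := hac.path_unique ⟨r.transfer t hredge, hr'p⟩ ⟨p, hp⟩
  have hmem : g ∈ (r.transfer t hredge).edges := by
    rw [show (r.transfer t hredge) = p from congrArg Subtype.val huniq]
    exact hg
  rw [Walk.edges_transfer] at hmem
  have := r.edges_subset_edgeSet hmem
  rw [edgeSet_deleteEdges] at this
  exact this.2 rfl

/-- B10: the edge-swap lemma. -/
lemma swap_tree {t : SimpleGraph α} (w : Sym2 α → ℝ) (ht : t.IsTree) {x y a b : α}
    (hxy : t.Adj x y) (hab : a ≠ b) (hf : s(a,b) ∉ t.edgeSet)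
    (hsep : ¬ (t.deleteEdges {s(x,y)}).Reachable a b) :
    ∃ t' : SimpleGraph α, t'.IsTree ∧
      t'.edgeSet = insert s(a,b) (t.edgeSet \ {s(x,y)}) ∧
      totalWeight t' w = totalWeight t w - w s(x,y) + w s(a,b) := by
  set E' : Set (Sym2 α) := insert s(a,b) (t.edgeSet \ {s(x,y)}) with hE'
  set t' : SimpleGraph α := SimpleGraph.fromEdgeSet E' with ht'
  have hES : t'.edgeSet = E' := by
    apply edgeSet_fromEdgeSet_of_nodiag
    intro e he
    rcases he with rfl | ⟨he, -⟩
    · simpa [Sym2.mk_isDiag_iff] using hab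
    · exact t.not_isDiag_of_mem_edgeSet he
  set td := t.deleteEdges {s(x,y)} with htd
  have hle : td ≤ t' := by
    rw [← edgeSet_subset_edgeSet, hES, edgeSet_deleteEdges]
    exact Set.subset_insert _ _
  have hadjab : t'.Adj a b := by rw [← mem_edgeSet, hES]; exact Set.mem_insert _ _
  have hsplit : ∀ v, td.Reachable x v ∨ td.Reachable y v := fun v =>
    reach_split (ht.isConnected.preconnected x v)
  have hxy' : t'.Reachable x y := by
    rcases hsplit a with ha' | ha' <;> rcases hsplit b with hb' | hb'
    · exact absurd (ha'.symm.trans hb') hsep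
    · exact ((ha'.mono hle).trans (hadjab.reachable.trans (hb'.mono hle).symm))
    · exact ((hb'.mono hle).trans (hadjab.symm.reachable.trans (ha'.mono hle).symm))
    · exact absurd (ha'.symm.trans hb') hsep
  have hreach : ∀ v, t'.Reachable x v := by
    intro v
    rcases hsplit v with h' | h'
    · exact h'.mono hle
    · exact hxy'.trans (h'.mono hle)
  have hconn' : t'.Connected := by
    rw [connected_iff]
    exact ⟨fun u v => (hreach u).symm.trans (hreach v), ⟨x⟩⟩
  have hxyE : s(x,y) ∈ t.edgeSet := hxy
  have habE' : s(a,b) ∉ t.edgeSet \ {s(x,y)} := fun h => hf h.1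
  have hncard : t'.edgeSet.ncard = t.edgeSet.ncard := by
    rw [hES, hE', Set.ncard_insert_of_notMem habE' ((t.edgeSet \ _).toFinite),
      Set.ncard_diff_singleton_of_mem hxyE]
    have hpos := (Set.ncard_pos (t.edgeSet.toFinite)).mpr ⟨_, hxyE⟩
    omega
  have htree : t'.IsTree := by
    apply isTree_of_connected_of_ncard hconn'
    rw [hncard]
    exact ncard_edgeSet_of_isTree ht
  refine ⟨t', htree, hES, ?_⟩
  rw [totalWeight_eq_sum, totalWeight_eq_sum]
  have hfin2 : t'.edgeSet.toFinite.toFinset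
      = insert s(a,b) ((t.edgeSet.toFinite.toFinset).erase s(x,y)) := by
    ext e
    simp only [Set.Finite.mem_toFinset, Finset.mem_insert, Finset.mem_erase,
      Set.Finite.mem_toFinset, hES, hE', Set.mem_insert_iff, Set.mem_diff,
      Set.mem_singleton_iff]
    tauto
  rw [hfin2, Finset.sum_insert (by simp only [Finset.mem_erase, Set.Finite.mem_toFinset]; exact fun h => hf h.2),
    Finset.sum_erase_eq_sub (by simpa using hxyE)]
  ring

lemma exists_maxSpanTree' {H : SimpleGraph α} (hconn : H.Connected) (w : Sym2 α → ℝ) :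
    ∃ t, IsMaxSpanTree H t w := by
  classical
  set S : Set (SimpleGraph α) := {t | t ≤ H ∧ t.IsTree} with hS
  have hfin : S.Finite := Set.toFinite _
  have hne : hfin.toFinset.Nonempty := by
    obtain ⟨t, h1, h2⟩ := exists_spanning_tree_s2 hconn
    exact ⟨t, by simp [hS, Set.Finite.mem_toFinset]; exact ⟨h1, h2⟩⟩
  obtain ⟨t, htm, hmax⟩ := hfin.toFinset.exists_max_image (fun t => totalWeight t w) hne
  rw [Set.Finite.mem_toFinset] at htm
  refine ⟨t, htm.1, htm.2, fun t' h1 h2 => ?_⟩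
  exact hmax t' (by rw [Set.Finite.mem_toFinset]; exact ⟨h1, h2⟩)

lemma exists_maxSpanTree_maxOverlap {H : SimpleGraph α} (hconn : H.Connected)
    (w : Sym2 α → ℝ) (M : Set (Sym2 α)) :
    ∃ t, IsMaxSpanTree H t w ∧ ∀ t', IsMaxSpanTree H t' w →
      (t'.edgeSet ∩ M).ncard ≤ (t.edgeSet ∩ M).ncard := by
  classical
  set S : Set (SimpleGraph α) := {t | IsMaxSpanTree H t w} with hS
  have hfin : S.Finite := Set.toFinite _
  have hne : hfin.toFinset.Nonempty := by
    obtain ⟨t, ht⟩ := exists_maxSpanTree' hconn w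
    exact ⟨t, by rw [Set.Finite.mem_toFinset]; exact ht⟩
  obtain ⟨t, htm, hmax⟩ := hfin.toFinset.exists_max_image
    (fun t => (t.edgeSet ∩ M).ncard) hne
  rw [Set.Finite.mem_toFinset] at htm
  exact ⟨t, htm, fun t' h' => hmax t' (by rwa [Set.Finite.mem_toFinset])⟩

/-- cycle property of maximum spanning trees -/
lemma cycle_property {H t : SimpleGraph α} {w : Sym2 α → ℝ} (ht : IsMaxSpanTree H t w)
    {u v : α} (huv : H.Adj u v) (hne : ¬ t.Adj u v) {p : t.Walk u v} (hp : p.IsPath)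
    {x y : α} (hg : s(x,y) ∈ p.edges) : w s(u,v) ≤ w s(x,y) := by
  obtain ⟨hle, htree, hmax⟩ := ht
  have hxyt : t.Adj x y := p.edges_subset_edgeSet hg
  have hsep : ¬ (t.deleteEdges {s(x,y)}).Reachable u v :=
    not_reachable_delete_of_mem_path htree.IsAcyclic hp hg
  obtain ⟨t', ht'tree, ht'E, ht'w⟩ := swap_tree w htree hxyt huv.ne
    (fun h => hne ((SimpleGraph.mem_edgeSet t).mp h)) hsep
  have ht'le : t' ≤ H := by
    rw [← edgeSet_subset_edgeSet, ht'E]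
    rintro e (rfl | ⟨he, -⟩)
    · exact huv
    · exact edgeSet_subset_edgeSet.mpr hle he
  have := hmax t' ht'le ht'tree
  rw [ht'w] at this
  linarith

/-- GEN1: any edge of a max spanning tree dominates the min edge of any other -/
lemma sInf_edge_le {H t1 t2 : SimpleGraph α} {w : Sym2 α → ℝ}
    (h1 : IsMaxSpanTree H t1 w) (h2 : IsMaxSpanTree H t2 w)
    {u v : α} (huv : t1.Adj u v) :
    sInf (w '' t2.edgeSet) ≤ w s(u,v) := by
  by_contra hlt
  push_neg at hlt
  have hbdd : BddBelow (w '' t2.edgeSet) := (t2.edgeSet.toFinite.image w).bddBelow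
  set A : Set α := {z | (t1.deleteEdges {s(u,v)}).Reachable u z} with hA
  have huA : u ∈ A := Reachable.refl _
  have hvA : v ∉ A := by
    have hsing : s(u,v) ∈ (Path.singleton huv).val.edges := by
      simp [Path.singleton]
    exact not_reachable_delete_of_mem_path h1.2.1.IsAcyclic (Path.singleton huv).2 hsing
  obtain ⟨q⟩ := h2.2.1.isConnected.preconnected u v
  obtain ⟨d, hd, hd1, hd2⟩ := q.exists_boundary_dart A huA hvA
  have hgw : sInf (w '' t2.edgeSet) ≤ w s(d.fst, d.snd) :=
    csInf_le hbdd ⟨s(d.fst, d.snd), d.edge_mem, rfl⟩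
  have hgnt1 : s(d.fst, d.snd) ∉ t1.edgeSet := by
    intro hmem
    by_cases he : s(d.fst, d.snd) = s(u,v)
    · rw [he] at hgw; linarith
    · have : (t1.deleteEdges {s(u,v)}).Adj d.fst d.snd := by
        rw [SimpleGraph.deleteEdges_adj]
        exact ⟨hmem, by simpa using he⟩
      exact hd2 (hd1.trans this.reachable)
  have hsep' : ¬ (t1.deleteEdges {s(u,v)}).Reachable d.fst d.snd := by
    intro h
    exact hd2 (hd1.trans h)
  obtain ⟨t', ht'tree, ht'E, ht'w⟩ := swap_tree w h1.2.1 huv d.adj.ne hgnt1 hsep'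
  have ht'le : t' ≤ H := by
    rw [← edgeSet_subset_edgeSet, ht'E]
    rintro e (rfl | ⟨he, -⟩)
    · exact edgeSet_subset_edgeSet.mpr h2.1 d.edge_mem
    · exact edgeSet_subset_edgeSet.mpr h1.1 he
  have := h1.2.2 t' ht'le ht'tree
  rw [ht'w] at this
  linarith

/-! ### Connected components as sets -/

def comp (H : SimpleGraph α) (x : α) : Set α := {y | H.Reachable x y}

def classes (H : SimpleGraph α) : Set (Set α) := Set.range (comp H)

lemma mem_comp_self (H : SimpleGraph α) (x : α) : x ∈ comp H x := Reachable.refl _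

lemma comp_eq_of_reachable {H : SimpleGraph α} {x y : α} (h : H.Reachable x y) :
    comp H x = comp H y := by
  ext z
  exact ⟨fun hz => h.symm.trans hz, fun hz => h.trans hz⟩

lemma reachable_of_comp_eq {H : SimpleGraph α} {x y : α} (h : comp H x = comp H y) :
    H.Reachable x y := by
  have : y ∈ comp H x := h ▸ mem_comp_self H y
  exact this

lemma reachable_of_mem_comp {H : SimpleGraph α} {x y : α} (h : y ∈ comp H x) :
    H.Reachable x y := h

lemma comp_mono {H H' : SimpleGraph α} (hle : H ≤ H') (x : α) : comp H x ⊆ comp H' x :=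
  fun _ hz => hz.mono hle

/-- the number of reachability classes grows by one when a bridge is deleted. -/
lemma classes_ncard_delete {H : SimpleGraph α} {a b : α} (hab : H.Adj a b)
    (hsep : ¬ (H.deleteEdges {s(a,b)}).Reachable a b) :
    (classes (H.deleteEdges {s(a,b)})).ncard = (classes H).ncard + 1 := by
  set H' := H.deleteEdges {s(a,b)} with hH'
  have hle : H' ≤ H := SimpleGraph.deleteEdges_le _
  have hsame : ∀ x, ¬ H.Reachable a x → comp H' x = comp H x := by
    intro x hax
    refine Set.Subset.antisymm (comp_mono hle x) ?_
    intro y hy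
    exact reachable_delete_of_not_reachable (fun h => hax h.symm) hy
  have hAB : ∀ x, H.Reachable a x → comp H' x = comp H' a ∨ comp H' x = comp H' b := by
    intro x hax
    rcases reach_split hax with h | h
    · exact Or.inl (comp_eq_of_reachable h.symm)
    · exact Or.inr (comp_eq_of_reachable h.symm)
  have hkey : classes H'
      = insert (comp H' a) (insert (comp H' b) (classes H \ {comp H a})) := by
    ext S
    simp only [Set.mem_insert_iff, Set.mem_diff, Set.mem_singleton_iff]
    constructor
    · rintro ⟨x, rfl⟩
      by_cases hax : H.Reachable a x
      · rcases hAB x hax with h | h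
        · exact Or.inl h
        · exact Or.inr (Or.inl h)
      · refine Or.inr (Or.inr ⟨⟨x, (hsame x hax).symm⟩, ?_⟩)
        intro hxa
        apply hax
        have : a ∈ comp H' x := hxa ▸ mem_comp_self H a
        exact ((comp_mono hle x) this).symm
    · rintro (rfl | rfl | ⟨⟨x, rfl⟩, hne⟩)
      · exact ⟨a, rfl⟩
      · exact ⟨b, rfl⟩
      · refine ⟨x, hsame x ?_⟩
        intro hax
        exact hne (comp_eq_of_reachable hax).symm
  have hbm : comp H' b ∉ classes H \ {comp H a} := by
    rintro ⟨hmem, hne⟩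
    obtain ⟨x, hx⟩ := hmem
    apply hne
    have hbx : b ∈ comp H x := by rw [hx]; exact mem_comp_self H' b
    have h2 : comp H x = comp H a :=
      comp_eq_of_reachable ((reachable_of_mem_comp hbx).trans hab.reachable.symm)
    exact Set.mem_singleton_iff.mpr (hx ▸ h2)
  have ham : comp H' a ∉ insert (comp H' b) (classes H \ {comp H a}) := by
    intro hmem
    rcases Set.mem_insert_iff.mp hmem with h | ⟨hmem2, hne⟩
    · exact hsep (reachable_of_comp_eq h)
    · obtain ⟨x, hx⟩ := hmem2
      apply hne
      have hax : a ∈ comp H x := by rw [hx]; exact mem_comp_self H' a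
      exact Set.mem_singleton_iff.mpr
        (hx ▸ (comp_eq_of_reachable (reachable_of_mem_comp hax)))
  rw [hkey, Set.ncard_insert_of_notMem ham (Set.toFinite _),
    Set.ncard_insert_of_notMem hbm (Set.toFinite _),
    Set.ncard_diff_singleton_of_mem
      (show comp H a ∈ classes H from Set.mem_range.mpr ⟨a, rfl⟩)]
  have hpos : 0 < (classes H).ncard :=
    (Set.ncard_pos (Set.toFinite _)).mpr
      ⟨comp H a, show comp H a ∈ classes H from Set.mem_range.mpr ⟨a, rfl⟩⟩
  omega

lemma classes_connected (H : SimpleGraph α) (hconn : H.Connected) :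
    classes H = {Set.univ} := by
  ext S
  simp only [Set.mem_singleton_iff, classes, Set.mem_range]
  constructor
  · rintro ⟨x, rfl⟩
    ext y
    simp only [Set.mem_univ, iff_true]
    exact hconn.preconnected x y
  · rintro rfl
    obtain ⟨x⟩ := hconn.nonempty
    refine ⟨x, ?_⟩
    ext y
    simp only [Set.mem_univ, iff_true]
    exact hconn.preconnected x y

lemma deleteEdges_mono_graph {H H' : SimpleGraph α} (h : H ≤ H') (s : Set (Sym2 α)) :
    H.deleteEdges s ≤ H'.deleteEdges s := by
  rw [← edgeSet_subset_edgeSet, edgeSet_deleteEdges, edgeSet_deleteEdges]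
  exact Set.diff_subset_diff_left (edgeSet_subset_edgeSet.mpr h)

/-- pruning a tree by `R` edges produces `R.card + 1` classes. -/
lemma classes_prune_ncard {t : SimpleGraph α} (ht : t.IsTree) (R : Finset (Sym2 α))
    (hR : ↑R ⊆ t.edgeSet) : (classes (t.deleteEdges ↑R)).ncard = R.card + 1 := by
  classical
  induction R using Finset.induction_on with
  | empty =>
    have h0 : t.deleteEdges (↑(∅ : Finset (Sym2 α))) = t := by
      simp [SimpleGraph.deleteEdges]
    rw [h0, classes_connected t ht.isConnected]
    simp
  | @insert e R he ih =>
    have hRs : ↑R ⊆ t.edgeSet := fun x hx => hR (by simp [hx])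
    have het : e ∈ t.edgeSet := hR (by simp)
    induction e using Sym2.ind with
    | _ u v =>
    have hadj : t.Adj u v := het
    set H := t.deleteEdges ↑R with hH
    have hsplit : t.deleteEdges ↑(insert s(u,v) R) = H.deleteEdges {s(u,v)} := by
      rw [hH, SimpleGraph.deleteEdges_deleteEdges]
      congr 1
      rw [Finset.coe_insert, Set.insert_eq, Set.union_comm]
    have hadj' : H.Adj u v := by
      rw [hH, SimpleGraph.deleteEdges_adj]
      exact ⟨hadj, by simpa using he⟩
    have hsept : ¬ (t.deleteEdges {s(u,v)}).Reachable u v :=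
      (isAcyclic_iff_forall_adj_isBridge.mp ht.IsAcyclic hadj)
    have hsepH : ¬ (H.deleteEdges {s(u,v)}).Reachable u v := by
      intro h
      exact hsept (h.mono (deleteEdges_mono_graph (SimpleGraph.deleteEdges_le _) _))
    rw [hsplit, classes_ncard_delete hadj' hsepH, ih hRs, Finset.card_insert_of_notMem he]

/-- induced graph on a reachability class is connected -/
lemma comp_induce_connected {F G' : SimpleGraph α} (hle : F ≤ G') (x : α) :
    (G'.induce (comp F x)).Connected := by
  apply SimpleGraph.induce_connected_of_patches x (mem_comp_self F x)
  intro v hv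
  obtain ⟨p⟩ := reachable_of_mem_comp hv
  set q := p.map (SimpleGraph.Hom.ofLE hle) with hq
  refine ⟨{y | y ∈ q.support}, ?_, q.start_mem_support, q.end_mem_support, ?_⟩
  · intro y hy
    have hy' : y ∈ p.support := by
      rw [hq] at hy
      simp only [Set.mem_setOf_eq, Walk.support_map] at hy
      simpa using hy
    exact ⟨p.takeUntil y hy'⟩
  · exact (q.connected_induce_support).preconnected _ _

/-- choose the `m` smallest elements -/
lemma exists_bottom (w : Sym2 α → ℝ) (s : Finset (Sym2 α)) :
    ∀ m, m ≤ s.card → ∃ R ⊆ s, R.card = m ∧ ∀ e ∈ R, ∀ f ∈ s \ R, w e ≤ w f := by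
  intro m
  induction m with
  | zero => intro _; exact ⟨∅, Finset.empty_subset _, rfl, by simp⟩
  | succ m ih =>
    intro hm
    obtain ⟨R, hRs, hRcard, hRmin⟩ := ih (by omega)
    have hne : (s \ R).Nonempty := by
      rw [← Finset.card_pos, Finset.card_sdiff_of_subset hRs]
      omega
    obtain ⟨e, hes, hemin⟩ := (s \ R).exists_min_image w hne
    refine ⟨insert e R, ?_, ?_, ?_⟩
    · exact Finset.insert_subset (Finset.mem_sdiff.mp hes).1 hRs
    · rw [Finset.card_insert_of_notMem (Finset.mem_sdiff.mp hes).2, hRcard]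
    · intro e' he' f hf
      have hfs : f ∈ s \ R := by
        rw [Finset.mem_sdiff] at hf ⊢
        exact ⟨hf.1, fun h => hf.2 (Finset.mem_insert_of_mem h)⟩
      rcases Finset.mem_insert.mp he' with rfl | h
      · exact hemin f hfs
      · exact hRmin e' h f hfs

lemma image_induce_edgeSet (T : SimpleGraph α) (S : Set α) :
    Sym2.map (Subtype.val : S → α) '' (T.induce S).edgeSet
      = {e | e ∈ T.edgeSet ∧ ∀ v ∈ e, v ∈ S} := by
  ext e
  constructor
  · rintro ⟨e', he', rfl⟩
    induction e' using Sym2.ind with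
    | _ a b =>
      refine ⟨he', ?_⟩
      intro v hv
      rw [Sym2.map_pair_eq, Sym2.mem_iff] at hv
      rcases hv with rfl | rfl
      · exact a.2
      · exact b.2
  · intro he
    induction e using Sym2.ind with
    | _ x y =>
      obtain ⟨hxy, hS⟩ := he
      have hx : x ∈ S := hS x (Sym2.mem_mk_left x y)
      have hy : y ∈ S := hS y (Sym2.mem_mk_right x y)
      exact ⟨s(⟨x, hx⟩, ⟨y, hy⟩), hxy, by simp⟩

lemma subtree_le_maxtree {G T : SimpleGraph α} {w : Sym2 α → ℝ}
    (hT : IsMaxSpanTree G T w) {S : Set α}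
    (hTS : (T.induce S).IsTree)
    (t' : SimpleGraph S) (ht'le : t' ≤ G.induce S) (ht' : t'.IsTree) :
    totalWeight t' (fun e => w (Sym2.map Subtype.val e)) ≤
      totalWeight (T.induce S) (fun e => w (Sym2.map Subtype.val e)) := by
  classical
  set ι : Sym2 S → Sym2 α := Sym2.map Subtype.val with hι
  have hinj : Function.Injective ι := Sym2.map.injective Subtype.val_injective
  set Einn : Set (Sym2 α) := ι '' (T.induce S).edgeSet with hEinn
  set Et' : Set (Sym2 α) := ι '' t'.edgeSet with hEt'
  have hEinnchar : Einn = {e | e ∈ T.edgeSet ∧ ∀ v ∈ e, v ∈ S} :=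
    image_induce_edgeSet T S
  have hEinnsub : Einn ⊆ T.edgeSet := by rw [hEinnchar]; exact fun e he => he.1
  have hEt'G : Et' ⊆ G.edgeSet := by
    rintro e ⟨e', he', rfl⟩
    induction e' using Sym2.ind with
    | _ a b => exact (edgeSet_subset_edgeSet.mpr ht'le he' : (G.induce S).Adj a b)
  have hEt'S : ∀ e ∈ Et', ∀ v ∈ e, v ∈ S := by
    rintro e ⟨e', he', rfl⟩ v hv
    induction e' using Sym2.ind with
    | _ a b =>
      rw [hι, Sym2.map_pair_eq, Sym2.mem_iff] at hv
      rcases hv with rfl | rfl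
      · exact a.2
      · exact b.2
  set E'' : Set (Sym2 α) := (T.edgeSet \ Einn) ∪ Et' with hE''
  have hE''G : E'' ⊆ G.edgeSet := by
    rintro e (⟨he, -⟩ | he)
    · exact edgeSet_subset_edgeSet.mpr hT.1 he
    · exact hEt'G he
  set T' : SimpleGraph α := SimpleGraph.fromEdgeSet E'' with hT'
  have hT'E : T'.edgeSet = E'' :=
    edgeSet_fromEdgeSet_of_nodiag (fun e he => G.not_isDiag_of_mem_edgeSet (hE''G he))
  have hT'le : T' ≤ G := by rw [← edgeSet_subset_edgeSet, hT'E]; exact hE''G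
  -- connectivity
  have hincl : ∀ a b : S, t'.Adj a b → T'.Adj (a : α) (b : α) := by
    intro a b hab
    have : s((a : α), (b : α)) ∈ T'.edgeSet := by
      rw [hT'E]
      exact Or.inr ⟨s(a, b), hab, rfl⟩
    exact this
  have hstep : ∀ x y, T.Adj x y → T'.Reachable x y := by
    intro x y hxy
    by_cases hin : x ∈ S ∧ y ∈ S
    · have hre : t'.Reachable ⟨x, hin.1⟩ ⟨y, hin.2⟩ :=
        ht'.isConnected.preconnected _ _
      exact hre.map (⟨Subtype.val, fun h => hincl _ _ h⟩ : t' →g T')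
    · have he : s(x,y) ∈ T'.edgeSet := by
        rw [hT'E]
        left
        refine ⟨hxy, fun hE => ?_⟩
        rw [hEinnchar] at hE
        exact hin ⟨hE.2 x (Sym2.mem_mk_left x y), hE.2 y (Sym2.mem_mk_right x y)⟩
      exact (SimpleGraph.Adj.reachable he)
  have hT'conn : T'.Connected := by
    rw [connected_iff]
    exact ⟨fun u v => reachable_transfer hstep (hT.2.1.isConnected.preconnected u v),
      hT.2.1.isConnected.nonempty⟩
  -- disjointness
  have hdisj : Disjoint (T.edgeSet \ Einn) Et' := by
    rw [Set.disjoint_left]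
    rintro e ⟨heT, heI⟩ heB
    apply heI
    rw [hEinnchar]
    exact ⟨heT, hEt'S e heB⟩
  -- cardinalities
  have hc1 : Et'.ncard = t'.edgeSet.ncard := Set.ncard_image_of_injective _ hinj
  have hc2 : Einn.ncard = (T.induce S).edgeSet.ncard := Set.ncard_image_of_injective _ hinj
  have hceq : t'.edgeSet.ncard = (T.induce S).edgeSet.ncard := by
    have h1 := ncard_edgeSet_of_isTree ht'
    have h2 := ncard_edgeSet_of_isTree hTS
    omega
  have hsubc : Einn.ncard ≤ T.edgeSet.ncard := Set.ncard_le_ncard hEinnsub T.edgeSet.toFinite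
  have hT'card : T'.edgeSet.ncard = T.edgeSet.ncard := by
    rw [hT'E, hE'', Set.ncard_union_eq hdisj (Set.toFinite _) (Set.toFinite _),
      Set.ncard_diff hEinnsub]
    omega
  have hT'tree : T'.IsTree := by
    apply isTree_of_connected_of_ncard hT'conn
    rw [hT'card]
    exact ncard_edgeSet_of_isTree hT.2.1
  -- weights
  have hsum := hT.2.2 T' hT'le hT'tree
  have hw1 : totalWeight T' w
      = totalWeight T w - totalWeight (T.induce S) (fun e => w (ι e))
        + totalWeight t' (fun e => w (ι e)) := by
    rw [totalWeight_eq_sum, totalWeight_eq_sum, totalWeight_eq_sum, totalWeight_eq_sum]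
    have hsplitF : T'.edgeSet.toFinite.toFinset
        = (T.edgeSet.toFinite.toFinset \ Einn.toFinite.toFinset)
          ∪ Et'.toFinite.toFinset := by
      ext e
      simp only [Set.Finite.mem_toFinset, Finset.mem_union, Finset.mem_sdiff,
        Set.Finite.mem_toFinset, hT'E, hE'', Set.mem_union, Set.mem_diff]
    have hdisjF : Disjoint (T.edgeSet.toFinite.toFinset \ Einn.toFinite.toFinset)
        Et'.toFinite.toFinset := by
      rw [Finset.disjoint_left]
      intro e he heB
      simp only [Finset.mem_sdiff, Set.Finite.mem_toFinset] at he heB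
      exact (Set.disjoint_left.mp hdisj ⟨he.1, he.2⟩) heB
    have himage1 : Einn.toFinite.toFinset
        = ((T.induce S).edgeSet.toFinite.toFinset).image ι := by
      ext e
      simp only [Set.Finite.mem_toFinset, Finset.mem_image, Set.Finite.mem_toFinset, hEinn,
        Set.mem_image]
    have himage2 : Et'.toFinite.toFinset
        = (t'.edgeSet.toFinite.toFinset).image ι := by
      ext e
      simp only [Set.Finite.mem_toFinset, Finset.mem_image, Set.Finite.mem_toFinset, hEt',
        Set.mem_image]
    have hsubF : Einn.toFinite.toFinset ⊆ T.edgeSet.toFinite.toFinset := by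
      intro e he
      simp only [Set.Finite.mem_toFinset] at he ⊢
      exact hEinnsub he
    have hs_inn : ∑ e ∈ Einn.toFinite.toFinset, w e
        = ∑ e ∈ (T.induce S).edgeSet.toFinite.toFinset, w (ι e) := by
      rw [himage1, Finset.sum_image (fun a _ b _ h => hinj h)]
    have hs_t' : ∑ e ∈ Et'.toFinite.toFinset, w e
        = ∑ e ∈ t'.edgeSet.toFinite.toFinset, w (ι e) := by
      rw [himage2, Finset.sum_image (fun a _ b _ h => hinj h)]
    have hsdiff : ∑ e ∈ (T.edgeSet.toFinite.toFinset \ Einn.toFinite.toFinset), w e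
        = ∑ e ∈ T.edgeSet.toFinite.toFinset, w e - ∑ e ∈ Einn.toFinite.toFinset, w e := by
      have h := Finset.sum_sdiff hsubF (f := w)
      linarith
    rw [hsplitF, Finset.sum_union hdisjF, hsdiff]
    linarith [hs_inn, hs_t']
  rw [hw1] at hsum
  linarith

end Aux

section Main
open SimpleGraph
set_option linter.unusedSectionVars false
set_option maxHeartbeats 1600000

variable {V : Type*} [Fintype V]

lemma isAcyclic_induce {H : SimpleGraph V} (h : H.IsAcyclic) (s : Set V) :
    (H.induce s).IsAcyclic := by
  intro v c hc
  exact h (c.map ⟨Subtype.val, fun hadj => hadj⟩)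
    ((Walk.map_isCycle_iff_of_injective Subtype.val_injective).mpr hc)

lemma edgeSet_nonempty_of_tree {C : Set V} (hC : ¬ C.Subsingleton) {t : SimpleGraph C}
    (ht : t.IsTree) : t.edgeSet.Nonempty := by
  by_contra hne
  rw [Set.not_nonempty_iff_eq_empty, edgeSet_eq_empty] at hne
  rw [Set.not_subsingleton_iff] at hC
  obtain ⟨x, hx, y, hy, hxy⟩ := hC
  have hr := ht.isConnected.preconnected ⟨x, hx⟩ ⟨y, hy⟩
  rw [hne, reachable_bot] at hr
  exact hxy (congrArg Subtype.val hr)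

lemma mapped_edge_mem {G : SimpleGraph V} {C : Set V} {t : SimpleGraph C}
    (hle : t ≤ G.induce C) {e : Sym2 C} (he : e ∈ t.edgeSet) :
    Sym2.map (Subtype.val : C → V) e ∈ G.edgeSet := by
  induction e using Sym2.ind with
  | _ a b => exact (hle he : (G.induce C).Adj a b)

lemma subWeight_map (w : Sym2 V → ℝ) (C : Set V) (e : Sym2 C) :
    subWeight w C e = w (Sym2.map Subtype.val e) := rfl

/-- P2 : there is always a `k`-clustering of quality at most `1`. -/
lemma exists_good_clustering (G : SimpleGraph V) (w : Sym2 V → ℝ) (hconn : G.Connected)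
    (hw : weightsOK G w) (k : ℕ) (hk1 : 1 ≤ k) (hk2 : k ≤ Fintype.card V) :
    ∃ 𝒟, IsClustering G 𝒟 k ∧ eval G w 𝒟 ≤ 1 := by
  classical
  obtain ⟨T, hT⟩ := exists_maxSpanTree' hconn w
  have hTcard : T.edgeSet.ncard + 1 = Fintype.card V := ncard_edgeSet_of_isTree hT.2.1
  obtain ⟨R, hRsub, hRcard, hRmin⟩ := exists_bottom w (T.edgeSet.toFinite.toFinset) (k-1)
    (by rw [← Set.ncard_eq_toFinset_card]; omega)
  have hRsubE : ↑R ⊆ T.edgeSet := fun e he => (Set.Finite.mem_toFinset _).mp (hRsub he)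
  set F := T.deleteEdges ↑R with hF
  have hFle : F ≤ T := SimpleGraph.deleteEdges_le _
  have hFG : F ≤ G := hFle.trans hT.1
  have hRsep : ∀ u v, s(u,v) ∈ R → ¬ F.Reachable u v := by
    intro u v he hr
    have hadj : T.Adj u v := hRsubE he
    have hbr := (isAcyclic_iff_forall_adj_isBridge.mp hT.2.1.IsAcyclic hadj)
    exact hbr (hr.mono (SimpleGraph.deleteEdges_anti (by simpa using he)))
  have hFedge : F.edgeSet = T.edgeSet \ ↑R := edgeSet_deleteEdges _
  -- edges of T inside a class are not in R
  have hinner : ∀ x, ∀ p q : V, p ∈ comp F x → q ∈ comp F x → T.Adj p q →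
      s(p,q) ∈ T.edgeSet ∧ s(p,q) ∉ (↑R : Set (Sym2 V)) := by
    intro x p q hp hq hadj
    refine ⟨hadj, fun hmem => ?_⟩
    exact hRsep p q (by simpa using hmem)
      (((reachable_of_mem_comp hp).symm.trans (reachable_of_mem_comp hq)))
  refine ⟨classes F, ⟨⟨?_, ?_, ?_⟩, ?_⟩, ?_⟩
  · rintro C ⟨x, rfl⟩
    exact ⟨⟨x, mem_comp_self F x⟩, Set.subset_univ _, comp_induce_connected hFG x⟩
  · rintro C ⟨x, rfl⟩ C' ⟨y, rfl⟩ hne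
    rw [Set.disjoint_left]
    intro z hz hz'
    exact hne (((comp_eq_of_reachable (reachable_of_mem_comp hz)).trans
      (comp_eq_of_reachable (reachable_of_mem_comp hz')).symm))
  · ext z
    simp only [Set.mem_sUnion, Set.mem_univ, iff_true]
    exact ⟨comp F z, ⟨z, rfl⟩, mem_comp_self F z⟩
  · rw [classes_prune_ncard hT.2.1 R hRsubE, hRcard]
    omega
  -- eval ≤ 1
  apply Real.sSup_le _ zero_le_one
  rintro r ⟨C, ⟨x, rfl⟩, rfl⟩
  set C := comp F x with hC
  by_cases hss : C.Subsingleton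
  · rw [phi, minMST, if_pos hss, div_one]
    apply Real.sSup_le _ zero_le_one
    rintro r ⟨e, he, rfl⟩
    exact le_of_lt (hw e he.1).2
  · have hCconn : (G.induce C).Connected := comp_induce_connected hFG x
    have hTSconn : (T.induce C).Connected := comp_induce_connected hFle x
    have hTS : (T.induce C).IsTree := ⟨hTSconn, isAcyclic_induce hT.2.1.IsAcyclic C⟩
    have hTSle : T.induce C ≤ G.induce C := by
      intro a b hab
      exact hT.1 hab
    have hTSmax : IsMaxSpanTree (G.induce C) (T.induce C) (subWeight w C) :=
      ⟨hTSle, hTS, fun t' h1 h2 => subtree_le_maxtree hT hTS t' h1 h2⟩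
    have hex : ∃ T₀ : SimpleGraph C, IsMaxSpanTree (G.induce C) T₀ (subWeight w C) :=
      ⟨_, hTSmax⟩
    have hT₀ := hex.choose_spec
    rw [phi, minMST, if_neg hss, dif_pos hex]
    set m := sInf (subWeight w C '' hex.choose.edgeSet) with hm
    have hT₀ne : hex.choose.edgeSet.Nonempty := edgeSet_nonempty_of_tree hss hT₀.2.1
    have hTSne : (T.induce C).edgeSet.Nonempty := edgeSet_nonempty_of_tree hss hTS
    have hmmem : m ∈ subWeight w C '' hex.choose.edgeSet :=
      (hT₀ne.image _).csInf_mem ((hex.choose.edgeSet.toFinite).image _)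
    have hmpos : 0 < m := by
      obtain ⟨e0, he0, heq⟩ := hmmem
      rw [← heq, subWeight_map]
      exact (hw _ (mapped_edge_mem hT₀.1 he0)).1
    rw [div_le_one hmpos]
    -- maxOut ≤ m
    apply Real.sSup_le _ (le_of_lt hmpos)
    rintro r ⟨e, ⟨heG, u, v, rfl, huC, hvC⟩, rfl⟩
    -- step A : w s(u,v) ≤ every weight of an edge of T.induce C
    have hstepA : ∀ f0 ∈ (T.induce C).edgeSet, w s(u,v) ≤ subWeight w C f0 := by
      intro f0 hf0
      induction f0 using Sym2.ind with
      | _ pp qq =>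
        have hadj0 : T.Adj ↑pp ↑qq := hf0
        obtain ⟨hg0T, hg0R⟩ := hinner x ↑pp ↑qq pp.2 qq.2 hadj0
        have hg0F : s((pp : V), (qq : V)) ∈ T.edgeSet.toFinite.toFinset \ R := by
          rw [Finset.mem_sdiff, Set.Finite.mem_toFinset]
          exact ⟨hg0T, by simpa using hg0R⟩
        by_cases heT : s(u,v) ∈ T.edgeSet
        · have heR : s(u,v) ∈ R := by
            by_contra heR
            have : F.Adj u v := by
              rw [hF, SimpleGraph.deleteEdges_adj]
              exact ⟨heT, by simpa using heR⟩
            exact hvC ((reachable_of_mem_comp huC).trans this.reachable)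
          exact hRmin _ heR _ hg0F
        · have hne : ¬ T.Adj u v := fun h => heT h
          obtain ⟨p0⟩ := hT.2.1.isConnected.preconnected u v
          set pp0 := p0.toPath with hpp0
          obtain ⟨d, hd, hd1, hd2⟩ := pp0.val.exists_boundary_dart C huC hvC
          have hgmem : s(d.fst, d.snd) ∈ pp0.val.edges := by
            apply List.mem_map_of_mem (f := Dart.edge) hd
          have hgT : s(d.fst, d.snd) ∈ T.edgeSet := pp0.val.edges_subset_edgeSet hgmem
          have hcyc : w s(u,v) ≤ w s(d.fst, d.snd) :=
            cycle_property hT heG hne pp0.2 hgmem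
          have hgR : s(d.fst, d.snd) ∈ R := by
            by_contra hgR
            have : F.Adj d.fst d.snd := by
              rw [hF, SimpleGraph.deleteEdges_adj]
              exact ⟨hgT, by simpa using hgR⟩
            exact hd2 ((reachable_of_mem_comp hd1).trans this.reachable)
          exact le_trans hcyc (hRmin _ hgR _ hg0F)
    -- step B : w s(u,v) ≤ sInf over T.induce C edges ≤ m
    have hB1 : w s(u,v) ≤ sInf (subWeight w C '' (T.induce C).edgeSet) := by
      apply le_csInf (hTSne.image _)
      rintro b ⟨f0, hf0, rfl⟩
      exact hstepA f0 hf0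
    have hB2 : sInf (subWeight w C '' (T.induce C).edgeSet) ≤ m := by
      apply le_csInf (hT₀ne.image _)
      rintro b ⟨f0, hf0, rfl⟩
      induction f0 using Sym2.ind with
      | _ pp qq => exact sInf_edge_le hT₀ hTSmax hf0
    exact le_trans hB1 hB2

end Main

section Final
open SimpleGraph
set_option linter.unusedSectionVars false
set_option maxHeartbeats 1600000


lemma statement2_aux {V : Type*} [Fintype V] (G : SimpleGraph V) (w : Sym2 V → ℝ)
    (hconn : G.Connected) (hw : weightsOK G w) (k : ℕ) (𝒞 : Set (Set V))
    (hopt : IsOptimal G w k 𝒞) (C : Set V) (hC : C ∈ 𝒞)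
    (T_C : SimpleGraph C) (hTC : IsMaxSpanTree (G.induce C) T_C (subWeight w C)) :
    ∃ T : SimpleGraph V, IsMaxSpanTree G T w ∧
      ∀ a b : C, T_C.Adj a b → T.Adj (a : V) (b : V) := by
  classical
  obtain ⟨⟨⟨hparts, hdisjo, hunion⟩, hk⟩, hopt2⟩ := hopt
  have hV : Nonempty V := hconn.nonempty
  have hk1 : 1 ≤ k := by
    have hpos := (Set.ncard_pos (Set.toFinite 𝒞)).mpr ⟨C, hC⟩
    omega
  have hk2 : k ≤ Fintype.card V := by
    rw [← hk]
    have hle := Set.ncard_le_ncard_of_injOn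
      (fun D : Set V => if h : D.Nonempty then h.some else Classical.arbitrary V)
      (fun D _ => Set.mem_univ _)
      (by
        intro D hD D' hD' heq
        simp only at heq
        by_contra hne
        have hDne : D.Nonempty := (hparts D hD).1
        have hD'ne : D'.Nonempty := (hparts D' hD').1
        rw [dif_pos hDne, dif_pos hD'ne] at heq
        have h1 : hDne.some ∈ D := hDne.some_mem
        have h2 : hDne.some ∈ D' := heq ▸ hD'ne.some_mem
        exact Set.disjoint_left.mp (hdisjo D hD D' hD' hne) h1 h2)
      (Set.finite_univ)
    rwa [Set.ncard_univ, Nat.card_eq_fintype_card] at hle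
  obtain ⟨𝒟, h𝒟c, h𝒟e⟩ := exists_good_clustering G w hconn hw k hk1 hk2
  have heval1 : eval G w 𝒞 ≤ 1 := le_trans (hopt2 𝒟 h𝒟c) h𝒟e
  have hphiC : phi G w C ≤ 1 := by
    refine le_trans (le_csSup ((Set.toFinite 𝒞 |>.image _).bddAbove) ⟨C, hC, rfl⟩) heval1
  by_cases hss : C.Subsingleton
  · obtain ⟨T, hTmax⟩ := exists_maxSpanTree' hconn w
    exact ⟨T, hTmax, fun a b hab => absurd (Subtype.ext (hss a.2 b.2)) hab.ne⟩
  · -- minMST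
    have hex : ∃ T₀ : SimpleGraph C, IsMaxSpanTree (G.induce C) T₀ (subWeight w C) :=
      ⟨T_C, hTC⟩
    have hT₀ := hex.choose_spec
    have hminMST : minMST G w C = sInf (subWeight w C '' hex.choose.edgeSet) := by
      rw [minMST, if_neg hss, dif_pos hex]
    have hT₀ne : hex.choose.edgeSet.Nonempty := edgeSet_nonempty_of_tree hss hT₀.2.1
    have hmmem : sInf (subWeight w C '' hex.choose.edgeSet)
        ∈ subWeight w C '' hex.choose.edgeSet :=
      (hT₀ne.image _).csInf_mem ((hex.choose.edgeSet.toFinite).image _)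
    have hmpos : 0 < minMST G w C := by
      rw [hminMST]
      obtain ⟨e0, he0, heq⟩ := hmmem
      rw [← heq, subWeight_map]
      exact (hw _ (mapped_edge_mem hT₀.1 he0)).1
    have hmaxle : maxOut G w C ≤ minMST G w C := by
      rw [phi, div_le_one hmpos] at hphiC
      exact hphiC
    -- per-edge key lemma
    have hkey : ∀ (a b : C), T_C.Adj a b → ∀ e ∈ outEdges G C, w e ≤ w s((a:V),(b:V)) := by
      intro a b hab e he
      have h1 : w e ≤ maxOut G w C :=
        le_csSup (((outEdges G C).toFinite.image w).bddAbove) ⟨e, he, rfl⟩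
      have h2 : minMST G w C ≤ w s((a:V),(b:V)) := by
        rw [hminMST]
        have h3 := sInf_edge_le hTC hT₀ hab
        rw [subWeight_map] at h3
        simpa using h3
      linarith
    set ι : Sym2 C → Sym2 V := Sym2.map Subtype.val with hι
    have hinj : Function.Injective ι := Sym2.map.injective Subtype.val_injective
    set M : Set (Sym2 V) := ι '' T_C.edgeSet with hM
    have hMC : ∀ e ∈ M, ∀ v ∈ e, v ∈ C := by
      rintro e ⟨e0, he0, rfl⟩ v hv
      induction e0 using Sym2.ind with
      | _ p q =>
        rw [hι, Sym2.map_pair_eq, Sym2.mem_iff] at hv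
        rcases hv with rfl | rfl
        · exact p.2
        · exact q.2
    obtain ⟨T, hTmax, hTover⟩ := exists_maxSpanTree_maxOverlap hconn w M
    have hMsub : ∀ a b : C, T_C.Adj a b → s((a:V),(b:V)) ∈ T.edgeSet := by
      by_contra hnots
      push_neg at hnots
      obtain ⟨a, b, hab, hfT⟩ := hnots
      have habV : (a : V) ≠ (b : V) := fun h => hab.ne (Subtype.ext h)
      have hfG : G.Adj (a : V) (b : V) := hTC.1 hab
      have hfM : s((a:V),(b:V)) ∈ M := ⟨s(a,b), hab, by simp [hι]⟩
      obtain ⟨p0⟩ := hTmax.2.1.isConnected.preconnected (a : V) (b : V)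
      set pp := p0.toPath with hpp
      -- find the exchange edge g in pp
      have hbridge : ¬ (T_C.deleteEdges {s(a,b)}).Reachable a b := by
        have hsing : s(a,b) ∈ (Path.singleton hab).val.edges := by
          simp [Path.singleton]
        exact not_reachable_delete_of_mem_path hTC.2.1.IsAcyclic
          (Path.singleton hab).2 hsing
      have hgoal : ∃ x y : V, s(x,y) ∈ pp.val.edges ∧ s(x,y) ∉ M ∧
          w s(x,y) ≤ w s((a:V),(b:V)) := by
        by_cases hallC : ∀ z ∈ pp.val.support, z ∈ C
        · -- all inside C : exchange within T_C
          set A' : Set V :=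
            Subtype.val '' {z : C | (T_C.deleteEdges {s(a,b)}).Reachable a z} with hA'
          have haA' : (a : V) ∈ A' := ⟨a, Reachable.refl _, rfl⟩
          have hbA' : (b : V) ∉ A' := by
            rintro ⟨z, hz, hzeq⟩
            rw [show z = b from Subtype.ext hzeq] at hz
            exact hbridge hz
          obtain ⟨d, hd, hd1, hd2⟩ := pp.val.exists_boundary_dart A' haA' hbA'
          have hgmem : s(d.fst, d.snd) ∈ pp.val.edges := List.mem_map_of_mem (f := Dart.edge) hd
          have hgT : s(d.fst, d.snd) ∈ T.edgeSet := pp.val.edges_subset_edgeSet hgmem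
          have hd1C : d.fst ∈ C := by
            obtain ⟨z, -, hzeq⟩ := hd1
            rw [← hzeq]; exact z.2
          have hd2C : d.snd ∈ C :=
            hallC _ (Walk.dart_snd_mem_support_of_mem_darts _ hd)
          set x' : C := ⟨d.fst, hd1C⟩ with hx'
          set y' : C := ⟨d.snd, hd2C⟩ with hy'
          have hx'r : (T_C.deleteEdges {s(a,b)}).Reachable a x' := by
            obtain ⟨z, hz, hzeq⟩ := hd1
            rwa [show z = x' from Subtype.ext hzeq] at hz
          have hy'r : ¬ (T_C.deleteEdges {s(a,b)}).Reachable a y' :=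
            fun h => hd2 ⟨y', h, rfl⟩
          have hx'y' : x' ≠ y' := fun h => d.adj.ne (congrArg Subtype.val h)
          have hG' : (G.induce C).Adj x' y' := edgeSet_subset_edgeSet.mpr hTmax.1 hgT
          have hgTC : s(x', y') ∉ T_C.edgeSet := by
            intro hmem
            have hne' : s(x', y') ≠ s(a, b) := by
              intro h
              apply hfT
              have : ι s(x',y') = ι s(a,b) := congrArg ι h
              rw [hι, Sym2.map_pair_eq, Sym2.map_pair_eq] at this
              rw [← this]
              exact hgT
            have hadj' : (T_C.deleteEdges {s(a,b)}).Adj x' y' := by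
              rw [SimpleGraph.deleteEdges_adj]
              exact ⟨hmem, by simpa using hne'⟩
            exact hy'r (hx'r.trans hadj'.reachable)
          have hsep' : ¬ (T_C.deleteEdges {s(a,b)}).Reachable x' y' :=
            fun h => hy'r (hx'r.trans h)
          obtain ⟨t'', ht''tree, ht''E, ht''w⟩ :=
            swap_tree (subWeight w C) hTC.2.1 hab hx'y' hgTC hsep'
          have ht''le : t'' ≤ G.induce C := by
            rw [← edgeSet_subset_edgeSet, ht''E]
            rintro e (rfl | ⟨he, -⟩)
            · exact hG'
            · exact edgeSet_subset_edgeSet.mpr hTC.1 he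
          have hwle := hTC.2.2 t'' ht''le ht''tree
          rw [ht''w] at hwle
          have hgle : w s(d.fst, d.snd) ≤ w s((a:V),(b:V)) := by
            have e1 : subWeight w C s(x', y') = w s(d.fst, d.snd) := rfl
            have e2 : subWeight w C s(a, b) = w s((a:V),(b:V)) := rfl
            rw [e1, e2] at hwle
            linarith
          refine ⟨d.fst, d.snd, hgmem, ?_, hgle⟩
          intro hmemM
          obtain ⟨e0, he0, heq⟩ := hmemM
          have : e0 = s(x', y') := by
            apply hinj
            rw [heq, hι, Sym2.map_pair_eq]
          rw [this] at he0
          exact hgTC he0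
        · -- walk leaves C : g is an out-edge
          push_neg at hallC
          obtain ⟨z0, hz0, hz0C⟩ := hallC
          set pre := pp.val.takeUntil z0 hz0 with hpre
          obtain ⟨d, hd, hd1, hd2⟩ := pre.exists_boundary_dart C a.2 hz0C
          have hgmem : s(d.fst, d.snd) ∈ pre.edges := List.mem_map_of_mem (f := Dart.edge) hd
          have hgmem' : s(d.fst, d.snd) ∈ pp.val.edges :=
            Walk.edges_takeUntil_subset _ hz0 hgmem
          have hgT : s(d.fst, d.snd) ∈ T.edgeSet := pp.val.edges_subset_edgeSet hgmem'
          have hout : s(d.fst, d.snd) ∈ outEdges G C :=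
            ⟨edgeSet_subset_edgeSet.mpr hTmax.1 hgT, d.fst, d.snd, rfl, hd1, hd2⟩
          refine ⟨d.fst, d.snd, hgmem', ?_, hkey a b hab _ hout⟩
          intro hmemM
          exact hd2 (hMC _ hmemM d.snd (Sym2.mem_mk_right _ _))
      -- common ending : swap g for f in T
      obtain ⟨x, y, hgmem, hgM, hgle⟩ := hgoal
      have hgT : s(x,y) ∈ T.edgeSet := pp.val.edges_subset_edgeSet hgmem
      have hgadj : T.Adj x y := hgT
      have hsepT : ¬ (T.deleteEdges {s(x,y)}).Reachable ↑a ↑b :=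
        not_reachable_delete_of_mem_path hTmax.2.1.IsAcyclic pp.2 hgmem
      obtain ⟨T', hT'tree, hT'E, hT'w⟩ := swap_tree w hTmax.2.1 hgadj habV hfT hsepT
      have hT'le : T' ≤ G := by
        rw [← edgeSet_subset_edgeSet, hT'E]
        rintro e (rfl | ⟨he, -⟩)
        · exact hfG
        · exact edgeSet_subset_edgeSet.mpr hTmax.1 he
      have hwle := hTmax.2.2 T' hT'le hT'tree
      have hweq : totalWeight T' w = totalWeight T w := by
        rw [hT'w]; rw [hT'w] at hwle; linarith
      have hT'max : IsMaxSpanTree G T' w :=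
        ⟨hT'le, hT'tree, fun t'' h1 h2 => le_trans (hTmax.2.2 t'' h1 h2) (by rw [hweq])⟩
      have hover := hTover T' hT'max
      have hinter : T'.edgeSet ∩ M = insert s((a:V),(b:V)) (T.edgeSet ∩ M) := by
        ext e
        rw [hT'E]
        simp only [Set.mem_inter_iff, Set.mem_insert_iff, Set.mem_diff,
          Set.mem_singleton_iff]
        constructor
        · rintro ⟨rfl | ⟨heT, hene⟩, heM⟩
          · exact Or.inl rfl
          · exact Or.inr ⟨heT, heM⟩
        · rintro (rfl | ⟨heT, heM⟩)
          · exact ⟨Or.inl rfl, hfM⟩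
          · refine ⟨Or.inr ⟨heT, ?_⟩, heM⟩
            rintro rfl
            exact hgM heM
      have hfnotin : s((a:V),(b:V)) ∉ T.edgeSet ∩ M := fun h => hfT h.1
      have hcardT' : (T'.edgeSet ∩ M).ncard = (T.edgeSet ∩ M).ncard + 1 := by
        rw [hinter, Set.ncard_insert_of_notMem hfnotin (Set.toFinite _)]
      omega
    refine ⟨T, hTmax, fun a b hab => hMsub a b hab⟩

end Final

/-- the maximum spanning tree of an optimal cluster is a subtree of some
maximum spanning tree of `G`. -/
theorem statement2 {V : Type*} [Fintype V] (G : SimpleGraph V) (w : Sym2 V → ℝ)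
    (hconn : G.Connected) (hw : weightsOK G w) (k : ℕ) (𝒞 : Set (Set V))
    (hopt : IsOptimal G w k 𝒞) (C : Set V) (hC : C ∈ 𝒞)
    (T_C : SimpleGraph C) (hTC : IsMaxSpanTree (G.induce C) T_C (subWeight w C)) :
    ∃ T : SimpleGraph V, IsMaxSpanTree G T w ∧
      ∀ a b : C, T_C.Adj a b → T.Adj (a : V) (b : V) :=
  statement2_aux G w hconn hw k 𝒞 hopt C hC T_C hTC


end Bal
end
end
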